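/- arXiv:1903.09193 — 5 statements merged into one kernel-verified Lean document; each statement's English description precedes it below -/
import Mathlib

section
/- If f belongs to the Sobolev space H^1(a,b) and f(a) = 0 or f(b) = 0, then the L^2 norm of f on [a,b] is at most (2(b-a)/π) times the L^2 norm of its derivative f'. -/
open MeasureTheory intervalIntegral Set Filter Topology Real

/-- Key step: if `f a = 0`, then `k² ∫ f² ≤ ∫ f'²` with `k = π/(2(b-a))`. -/
lemma wirt_key (a b : ℝ) (hab : a < b) (f f' : ℝ → ℝ)
    (hderiv : ∀ x ∈ Set.Icc a b, HasDerivAt f (f' x) x)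
    (hf'2 : IntervalIntegrable (fun x => (f' x) ^ 2) MeasureTheory.volume a b)
    (ha0 : f a = 0) :
    (Real.pi / (2 * (b - a))) ^ 2 * ∫ x in a..b, (f x) ^ 2 ≤ ∫ x in a..b, (f' x) ^ 2 := by
  have hba : (0:ℝ) < b - a := by linarith
  set k : ℝ := Real.pi / (2 * (b - a)) with hk_def
  have hk : 0 < k := div_pos Real.pi_pos (by linarith)
  have hkb : k * (b - a) = Real.pi / 2 := by
    field_simp [hk_def]
    rw [hk_def, div_mul_eq_mul_div, div_mul_eq_mul_div, div_eq_iff (ne_of_gt (by linarith))]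
    ring
  set c : ℝ → ℝ := fun x => k * Real.cos (k * (x - a)) / Real.sin (k * (x - a)) with hc_def
  -- basic facts on (a, b]
  have hu_mem : ∀ x ∈ Set.Ioc a b, 0 < k * (x - a) ∧ k * (x - a) ≤ Real.pi / 2 := by
    intro x hx
    constructor
    · exact mul_pos hk (by linarith [hx.1])
    · rw [← hkb]
      exact mul_le_mul_of_nonneg_left (by linarith [hx.2]) hk.le
  have hsin : ∀ x ∈ Set.Ioc a b, 0 < Real.sin (k * (x - a)) := by
    intro x hx
    obtain ⟨h1, h2⟩ := hu_mem x hx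
    exact Real.sin_pos_of_pos_of_lt_pi h1 (lt_of_le_of_lt h2 (by linarith [Real.pi_pos]))
  have hcos : ∀ x ∈ Set.Ioc a b, 0 ≤ Real.cos (k * (x - a)) := by
    intro x hx
    obtain ⟨h1, h2⟩ := hu_mem x hx
    exact Real.cos_nonneg_of_mem_Icc ⟨by linarith [Real.pi_pos], h2⟩
  have hc_nonneg : ∀ x ∈ Set.Ioc a b, 0 ≤ c x :=
    fun x hx => div_nonneg (mul_nonneg hk.le (hcos x hx)) (hsin x hx).le
  have hcb : c b = 0 := by
    simp [hc_def, hkb, Real.cos_pi_div_two]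
  -- continuity of f on [a,b]
  have hfc : ContinuousOn f (Set.Icc a b) := fun x hx =>
    (hderiv x hx).continuousAt.continuousWithinAt
  -- derivative of c
  have hc_deriv : ∀ x ∈ Set.Ioc a b, HasDerivAt c (-(k ^ 2 + (c x) ^ 2)) x := by
    intro x hx
    have hs := hsin x hx
    have hu : HasDerivAt (fun y : ℝ => k * (y - a)) k x := by
      simpa using ((hasDerivAt_id x).sub_const a).const_mul k
    have h1 : HasDerivAt (fun y : ℝ => Real.cos (k * (y - a)))
        (-Real.sin (k * (x - a)) * k) x := (Real.hasDerivAt_cos _).comp x hu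
    have h2 : HasDerivAt (fun y : ℝ => Real.sin (k * (y - a)))
        (Real.cos (k * (x - a)) * k) x := (Real.hasDerivAt_sin _).comp x hu
    have h3 := (h1.const_mul k).div h2 hs.ne'
    refine h3.congr_deriv ?_
    have hpy : Real.sin (k * (x - a)) ^ 2 + Real.cos (k * (x - a)) ^ 2 = 1 :=
      Real.sin_sq_add_cos_sq _
    simp only [hc_def]
    field_simp
    nlinarith [hs, hpy]
  -- the main inequality for t ∈ (a, b]
  have main : ∀ t ∈ Set.Ioc a b,
      k ^ 2 * ∫ x in t..b, (f x) ^ 2 ≤ (∫ x in t..b, (f' x) ^ 2) + c t * (f t) ^ 2 := by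
    intro t ht
    have htb : t ≤ b := ht.2
    have hsub : Set.Icc t b ⊆ Set.Ioc a b := fun x hx => ⟨lt_of_lt_of_le ht.1 hx.1, hx.2⟩
    have hsub' : Set.Icc t b ⊆ Set.Icc a b := fun x hx => ⟨le_of_lt (lt_of_lt_of_le ht.1 hx.1), hx.2⟩
    have huIcc : Set.uIcc t b = Set.Icc t b := Set.uIcc_of_le htb
    have huIoc : Set.uIoc t b = Set.Ioc t b := Set.uIoc_of_le htb
    -- continuity of c on [t, b]
    have hlin : Continuous (fun x : ℝ => k * (x - a)) :=
      continuous_const.mul (continuous_id.sub continuous_const)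
    have hcc : ContinuousOn c (Set.Icc t b) := by
      apply ContinuousOn.div
      · exact (continuous_const.mul (Real.continuous_cos.comp hlin)).continuousOn
      · exact (Real.continuous_sin.comp hlin).continuousOn
      · exact fun x hx => (hsin x (hsub hx)).ne'
    have hfc' : ContinuousOn f (Set.Icc t b) := hfc.mono hsub'
    -- the derivative of G = c * f^2
    set G' : ℝ → ℝ := fun x => -(k ^ 2 + (c x) ^ 2) * (f x) ^ 2 + c x * (2 * f x * f' x)
      with hG'_def
    have hG : ∀ x ∈ Set.uIcc t b, HasDerivAt (fun y => c y * (f y) ^ 2) (G' x) x := by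
      intro x hx
      rw [huIcc] at hx
      have h1 := (hc_deriv x (hsub hx)).mul ((hderiv x (hsub' hx)).pow 2)
      refine h1.congr_deriv ?_
      simp only [hG'_def, Pi.pow_apply]
      push_cast
      ring
    -- integrability of the parts
    have hf'2t : IntervalIntegrable (fun x => (f' x) ^ 2) volume t b :=
      hf'2.mono_set (by rw [huIcc, Set.uIcc_of_le hab.le]; exact Set.Icc_subset_Icc ht.1.le le_rfl)
    have hf2t : IntervalIntegrable (fun x => (f x) ^ 2) volume t b :=
      ((hfc'.pow 2).mono (by rw [huIcc])).intervalIntegrable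
    have hpart1 : IntervalIntegrable (fun x => -(k ^ 2 + (c x) ^ 2) * (f x) ^ 2) volume t b := by
      apply ContinuousOn.intervalIntegrable
      rw [huIcc]
      exact (((continuousOn_const.add (hcc.pow 2)).neg).mul (hfc'.pow 2))
    -- measurability of f' on the interval
    have hf'm : AEStronglyMeasurable f' (volume.restrict (Set.uIoc t b)) := by
      have h1 : ∀ x ∈ Set.uIoc t b, deriv f x = f' x := by
        intro x hx
        rw [huIoc] at hx
        exact ((hderiv x (hsub' ⟨hx.1.le, hx.2⟩)).deriv)
      exact (stronglyMeasurable_deriv f).aestronglyMeasurable.congr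
        ((ae_restrict_iff' measurableSet_uIoc).2 (Filter.Eventually.of_forall h1))
    have hcfm : AEStronglyMeasurable (fun x => c x * (2 * f x)) (volume.restrict (Set.uIoc t b)) := by
      have : ContinuousOn (fun x => c x * (2 * f x)) (Set.uIoc t b) := by
        rw [huIoc]
        exact (hcc.mono Set.Ioc_subset_Icc_self).mul
          ((continuousOn_const.mul (hfc'.mono Set.Ioc_subset_Icc_self)))
      exact (this.aemeasurable measurableSet_uIoc).aestronglyMeasurable
    -- bound for the product part
    obtain ⟨C, hC⟩ := (isCompact_Icc : IsCompact (Set.Icc t b)).exists_bound_of_continuousOn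
      (hcc.mul (continuousOn_const.mul hfc'))
    set C' : ℝ := max C 0 with hC'_def
    have hC'0 : 0 ≤ C' := le_max_right _ _
    have hpart2 : IntervalIntegrable (fun x => c x * (2 * f x * f' x)) volume t b := by
      have hmaj : IntervalIntegrable (fun x => C' * (1 + (f' x) ^ 2)) volume t b :=
        (intervalIntegrable_const.add hf'2t).const_mul C'
      apply hmaj.mono_fun
      · have : (fun x => c x * (2 * f x * f' x)) = fun x => (c x * (2 * f x)) * f' x := by
          funext x; ring
        rw [this]
        exact hcfm.mul hf'm
      · apply (ae_restrict_iff' measurableSet_uIoc).2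
        apply Filter.Eventually.of_forall
        intro x hx
        rw [huIoc] at hx
        have hb1 : ‖c x * (2 * f x)‖ ≤ C := hC x (Set.Ioc_subset_Icc_self hx)
        have hb2 : |f' x| ≤ 1 + (f' x) ^ 2 := by nlinarith [abs_nonneg (f' x), sq_abs (f' x)]
        have hCnn : 0 ≤ C := le_trans (norm_nonneg _) hb1
        simp only [Real.norm_eq_abs]
        calc |c x * (2 * f x * f' x)| = |c x * (2 * f x)| * |f' x| := by
              rw [← abs_mul]; ring_nf
          _ ≤ C' * (1 + (f' x) ^ 2) := by
              apply mul_le_mul (le_trans hb1 (le_max_left _ _)) hb2 (abs_nonneg _) hC'0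
          _ ≤ |C' * (1 + (f' x) ^ 2)| := le_abs_self _
    have hG'int : IntervalIntegrable G' volume t b := hpart1.add hpart2
    -- FTC
    have hFTC : ∫ x in t..b, G' x = c b * (f b) ^ 2 - c t * (f t) ^ 2 :=
      intervalIntegral.integral_eq_sub_of_hasDerivAt hG hG'int
    rw [hcb, zero_mul, zero_sub] at hFTC
    -- pointwise identity
    have hpt : ∀ x, (f' x - c x * f x) ^ 2 = (f' x) ^ 2 - G' x - k ^ 2 * (f x) ^ 2 := by
      intro x; simp only [hG'_def]; ring
    have hnn : 0 ≤ ∫ x in t..b, (f' x - c x * f x) ^ 2 :=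
      intervalIntegral.integral_nonneg htb (fun x _ => sq_nonneg _)
    have heq : ∫ x in t..b, (f' x - c x * f x) ^ 2
        = (∫ x in t..b, (f' x) ^ 2) - (∫ x in t..b, G' x) - k ^ 2 * ∫ x in t..b, (f x) ^ 2 := by
      rw [← intervalIntegral.integral_sub hf'2t hG'int, ← intervalIntegral.integral_const_mul,
        ← intervalIntegral.integral_sub (hf'2t.sub hG'int) (hf2t.const_mul _)]
      exact intervalIntegral.integral_congr (fun x _ => hpt x)
    rw [heq, hFTC] at hnn
    linarith
  -- now take the limit t → a⁺
  have hne : (𝓝[>] a).NeBot := nhdsGT_neBot a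
  have hIoo : Set.Ioo a b ∈ 𝓝[>] a := Ioo_mem_nhdsGT_of_mem ⟨le_refl a, hab⟩
  -- continuity of the primitives at a from the right
  have hf2' : IntegrableOn (fun x => (f x) ^ 2) (Set.uIcc a b) volume := by
    rw [Set.uIcc_of_le hab.le]
    exact (hfc.pow 2).integrableOn_Icc
  have hf'2' : IntegrableOn (fun x => (f' x) ^ 2) (Set.uIcc a b) volume := by
    rw [Set.uIcc_of_le hab.le, integrableOn_Icc_iff_integrableOn_Ioc]
    rw [intervalIntegrable_iff_integrableOn_Ioc_of_le hab.le] at hf'2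
    exact hf'2
  have hmono : 𝓝[>] a ≤ 𝓝[Set.uIcc a b] a := by
    rw [Set.uIcc_of_le hab.le, ← nhdsWithin_Ioc_eq_nhdsGT hab]
    exact nhdsWithin_mono a Set.Ioc_subset_Icc_self
  have hmemA : a ∈ Set.uIcc a b := Set.left_mem_uIcc
  have hL : Tendsto (fun t => k ^ 2 * ∫ x in t..b, (f x) ^ 2) (𝓝[>] a)
      (𝓝 (k ^ 2 * ∫ x in a..b, (f x) ^ 2)) := by
    apply Tendsto.const_mul
    exact (intervalIntegral.continuousOn_primitive_interval_left hf2' a hmemA).mono_left hmono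
  have hprim : Tendsto (fun t => ∫ x in t..b, (f' x) ^ 2) (𝓝[>] a)
      (𝓝 (∫ x in a..b, (f' x) ^ 2)) :=
    (intervalIntegral.continuousOn_primitive_interval_left hf'2' a hmemA).mono_left hmono
  -- the boundary term tends to 0
  have hbt : Tendsto (fun t => c t * (f t) ^ 2) (𝓝[>] a) (𝓝 0) := by
    have hslope : Tendsto (fun t => (f t - f a) / (t - a)) (𝓝[>] a) (𝓝 (f' a)) := by
      have h1 := (hasDerivAt_iff_tendsto_slope.1 (hderiv a ⟨le_refl a, hab.le⟩))
      have h2 : (𝓝[>] a) ≤ 𝓝[≠] a :=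
        nhdsWithin_mono a (fun x hx => ne_of_gt hx)
      exact (h1.mono_left h2).congr (fun t => by rw [slope_def_field])
    have hsub : Tendsto (fun t : ℝ => t - a) (𝓝[>] a) (𝓝 0) := by
      have h0 : Tendsto (fun t : ℝ => t - a) (𝓝 a) (𝓝 (a - a)) :=
        (continuous_id.sub continuous_const).tendsto a
      rw [sub_self] at h0
      exact h0.mono_left nhdsWithin_le_nhds
    have hbound : Tendsto (fun t => ((f t - f a) / (t - a)) ^ 2 * (t - a)) (𝓝[>] a) (𝓝 0) := by
      have := (hslope.pow 2).mul hsub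
      simpa using this
    apply squeeze_zero' ?_ ?_ hbound
    · filter_upwards [hIoo] with t ht
      exact mul_nonneg (hc_nonneg t ⟨ht.1, ht.2.le⟩) (sq_nonneg _)
    · filter_upwards [hIoo] with t ht
      have hta : 0 < t - a := by linarith [ht.1]
      have hu1 : 0 < k * (t - a) := mul_pos hk hta
      have hu2 : k * (t - a) < Real.pi / 2 := by
        rw [← hkb]
        exact mul_lt_mul_of_pos_left (by linarith [ht.2]) hk
      have hcpos : 0 < Real.cos (k * (t - a)) :=
        Real.cos_pos_of_mem_Ioo ⟨by linarith [Real.pi_pos], hu2⟩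
      have hspos : 0 < Real.sin (k * (t - a)) := hsin t ⟨ht.1, ht.2.le⟩
      have htan := Real.lt_tan hu1 hu2
      rw [Real.tan_eq_sin_div_cos] at htan
      have h5 : k * (t - a) * Real.cos (k * (t - a)) < Real.sin (k * (t - a)) :=
        (lt_div_iff₀ hcpos).1 htan
      have h6 : c t ≤ 1 / (t - a) := by
        rw [hc_def, div_le_div_iff₀ hspos hta]
        nlinarith [h5]
      calc c t * (f t) ^ 2 ≤ (1 / (t - a)) * (f t) ^ 2 :=
            mul_le_mul_of_nonneg_right h6 (sq_nonneg _)
        _ = ((f t - f a) / (t - a)) ^ 2 * (t - a) := by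
            rw [ha0]; field_simp; ring
  have hR : Tendsto (fun t => (∫ x in t..b, (f' x) ^ 2) + c t * (f t) ^ 2) (𝓝[>] a)
      (𝓝 (∫ x in a..b, (f' x) ^ 2)) := by
    have := hprim.add hbt
    simpa using this
  have hev : ∀ᶠ t in 𝓝[>] a, k ^ 2 * ∫ x in t..b, (f x) ^ 2
      ≤ (∫ x in t..b, (f' x) ^ 2) + c t * (f t) ^ 2 := by
    filter_upwards [hIoo] with t ht
    exact main t ⟨ht.1, ht.2.le⟩
  exact le_of_tendsto_of_tendsto hL hR hev

lemma wirt_sqrt (a b : ℝ) (hab : a < b) (f f' : ℝ → ℝ)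
    (hderiv : ∀ x ∈ Set.Icc a b, HasDerivAt f (f' x) x)
    (hf'2 : IntervalIntegrable (fun x => (f' x) ^ 2) MeasureTheory.volume a b)
    (ha0 : f a = 0) :
    Real.sqrt (∫ x in a..b, (f x) ^ 2) ≤
      (2 * (b - a) / Real.pi) * Real.sqrt (∫ x in a..b, (f' x) ^ 2) := by
  have key := wirt_key a b hab f f' hderiv hf'2 ha0
  have hπ := Real.pi_pos
  have hba : (0:ℝ) < b - a := by linarith
  have hC : 0 < 2 * (b - a) / Real.pi := by positivity
  have h2 : ∫ x in a..b, (f x) ^ 2 ≤ (2 * (b - a) / Real.pi) ^ 2 * ∫ x in a..b, (f' x) ^ 2 := by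
    have hkk : (Real.pi / (2 * (b - a))) ^ 2 * ((2 * (b - a) / Real.pi) ^ 2) = 1 := by
      field_simp
    have h3 := mul_le_mul_of_nonneg_left key (sq_nonneg (2 * (b - a) / Real.pi))
    calc ∫ x in a..b, (f x) ^ 2
        = ((Real.pi / (2 * (b - a))) ^ 2 * ((2 * (b - a) / Real.pi) ^ 2)) *
            ∫ x in a..b, (f x) ^ 2 := by rw [hkk, one_mul]
      _ = (2 * (b - a) / Real.pi) ^ 2 * ((Real.pi / (2 * (b - a))) ^ 2 *
            ∫ x in a..b, (f x) ^ 2) := by ring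
      _ ≤ (2 * (b - a) / Real.pi) ^ 2 * ∫ x in a..b, (f' x) ^ 2 := h3
  calc Real.sqrt (∫ x in a..b, (f x) ^ 2)
      ≤ Real.sqrt ((2 * (b - a) / Real.pi) ^ 2 * ∫ x in a..b, (f' x) ^ 2) :=
        Real.sqrt_le_sqrt h2
    _ = (2 * (b - a) / Real.pi) * Real.sqrt (∫ x in a..b, (f' x) ^ 2) := by
        rw [Real.sqrt_mul (sq_nonneg _), Real.sqrt_sq hC.le]

/-- Wirtinger's inequality: for `f ∈ H^1(a,b)` with `f a = 0` or `f b = 0`,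
`‖f‖_{L²} ≤ (2(b-a)/π) ‖f'‖_{L²}`. -/
theorem wirtinger_inequality (a b : ℝ) (hab : a < b) (f f' : ℝ → ℝ)
    (hderiv : ∀ x ∈ Set.Icc a b, HasDerivAt f (f' x) x)
    (hf2 : IntervalIntegrable (fun x => (f x) ^ 2) MeasureTheory.volume a b)
    (hf'2 : IntervalIntegrable (fun x => (f' x) ^ 2) MeasureTheory.volume a b)
    (hbc : f a = 0 ∨ f b = 0) :
    Real.sqrt (∫ x in a..b, (f x) ^ 2) ≤
      (2 * (b - a) / Real.pi) * Real.sqrt (∫ x in a..b, (f' x) ^ 2) := by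
  rcases hbc with h | h
  · exact wirt_sqrt a b hab f f' hderiv hf'2 h
  · set g : ℝ → ℝ := fun x => f (a + b - x) with hg_def
    set g' : ℝ → ℝ := fun x => -f' (a + b - x) with hg'_def
    have hg : ∀ x ∈ Set.Icc a b, HasDerivAt g (g' x) x := by
      intro x hx
      have hmem : a + b - x ∈ Set.Icc a b := ⟨by linarith [hx.2], by linarith [hx.1]⟩
      have h1 : HasDerivAt (fun y : ℝ => a + b - y) (-1) x := by
        simpa using (hasDerivAt_id x).const_sub (a + b)
      have h2 := (hderiv _ hmem).comp x h1
      simpa [hg_def, hg'_def, Function.comp_def, mul_comm] using h2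
    have hg'2 : IntervalIntegrable (fun x => (g' x) ^ 2) MeasureTheory.volume a b := by
      have h1 := (hf'2.comp_sub_left (a + b)).symm
      have h2 : ((a + b) - b) = a := by ring
      have h3 : ((a + b) - a) = b := by ring
      rw [h2, h3] at h1
      apply h1.congr
      intro x _
      simp [hg'_def]
    have ha0g : g a = 0 := by
      simp only [hg_def]
      rw [show a + b - a = b by ring]
      exact h
    have hres := wirt_sqrt a b hab g g' hg hg'2 ha0g
    have e1 : (∫ x in a..b, (g x) ^ 2) = ∫ x in a..b, (f x) ^ 2 := by
      have h1 := intervalIntegral.integral_comp_sub_left (fun y => (f y) ^ 2) (a + b)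
        (a := a) (b := b)
      simp only [hg_def]
      rw [h1, show a + b - b = a by ring, show a + b - a = b by ring]
    have e2 : (∫ x in a..b, (g' x) ^ 2) = ∫ x in a..b, (f' x) ^ 2 := by
      have h1 := intervalIntegral.integral_comp_sub_left (fun y => (f' y) ^ 2) (a + b)
        (a := a) (b := b)
      have h2 : (∫ x in a..b, (g' x) ^ 2) = ∫ x in a..b, (f' (a + b - x)) ^ 2 := by
        apply intervalIntegral.integral_congr
        intro x _
        simp [hg'_def]
      rw [h2, h1, show a + b - b = a by ring, show a + b - a = b by ring]
    rw [e1, e2] at hres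
    exact hres
end

section
/- Halanay's inequality: Let 0 < δ₁ < 2δ₀, τ_M > 0, and let V : [t₀ - τ_M, ∞) → [0, ∞) be absolutely continuous and satisfy V'(t) ≤ -2δ₀ V(t) + δ₁ sup_{θ ∈ [-τ_M, 0]} V(t+θ) for almost every t ≥ t₀. Then V(t) ≤ e^{-2δ(t - t₀)} sup_{θ ∈ [-τ_M, 0]} V(t₀ + θ) for all t ≥ t₀, where δ > 0 is the unique positive solution of δ = δ₀ - (δ₁/2) e^{2δτ_M}. -/
open Set Filter Topology

/-- If `f` has derivative `f'` at `a`, is nonnegative at `a`, and is negative just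
to the left of `a`, then `f' ≥ 0`. -/
lemma halanay_pos_left_deriv {f : ℝ → ℝ} {f' a b : ℝ} (hb : b < a)
    (hd : HasDerivAt f f' a) (ha : 0 ≤ f a) (h : ∀ s ∈ Set.Ioo b a, f s < 0) : 0 ≤ f' := by
  have h1 : Tendsto (slope f a) (𝓝[<] a) (𝓝 f') :=
    (hasDerivAt_iff_tendsto_slope.mp hd).mono_left
      (nhdsWithin_mono _ (fun s hs => ne_of_lt hs))
  refine ge_of_tendsto h1 ?_
  filter_upwards [Ioo_mem_nhdsLT_of_mem (⟨hb, le_refl a⟩ : a ∈ Set.Ioc b a)] with s hs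
  have h2 : 0 < f a - f s := by have := h s hs; linarith
  have h3 : 0 < a - s := by linarith [hs.2]
  have h4 : slope f a s = (f a - f s) / (a - s) := by
    rw [slope_comm, slope_def_field]
  rw [h4]
  exact (div_pos h2 h3).le

/-- Halanay's inequality: if `0 < δ₁ < 2δ₀` and the absolutely continuous nonnegative
function `V` satisfies `V'(t) ≤ -2δ₀ V(t) + δ₁ sup_{θ∈[-τ_M,0]} V(t+θ)` for `t ≥ t₀`,
then `V(t) ≤ e^{-2δ(t-t₀)} sup_{θ∈[-τ_M,0]} V(t₀+θ)` for `t ≥ t₀`, where `δ > 0`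
solves `δ = δ₀ - (δ₁/2) e^{2δτ_M}`. -/
theorem halanay_inequality (δ₀ δ₁ τM t₀ : ℝ) (hδ₁ : 0 < δ₁) (hδ₀ : δ₁ < 2 * δ₀)
    (hτM : 0 < τM) (V V' : ℝ → ℝ)
    (hVnn : ∀ t, 0 ≤ V t) (hVcont : Continuous V)
    (hVderiv : ∀ t ≥ t₀, HasDerivAt V (V' t) t)
    (hineq : ∀ t ≥ t₀, V' t ≤ -2 * δ₀ * V t + δ₁ * sSup (V '' Set.Icc (t - τM) t))
    (δ : ℝ) (hδpos : 0 < δ) (hδ : δ = δ₀ - δ₁ * Real.exp (2 * δ * τM) / 2) :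
    ∀ t ≥ t₀, V t ≤ Real.exp (-2 * δ * (t - t₀)) * sSup (V '' Set.Icc (t₀ - τM) t₀) := by
  have hδ₀pos : 0 < δ₀ := by linarith
  set M := sSup (V '' Set.Icc (t₀ - τM) t₀) with hMdef
  have hMbd : BddAbove (V '' Set.Icc (t₀ - τM) t₀) :=
    (isCompact_Icc.image hVcont).bddAbove
  have hVt₀M : V t₀ ≤ M :=
    le_csSup hMbd ⟨t₀, ⟨by constructor <;> linarith, rfl⟩⟩
  have hMnn : 0 ≤ M := le_trans (hVnn t₀) hVt₀M
  have hcontU : ∀ c d : ℝ, Continuous (fun s : ℝ => c * Real.exp (d * (s - t₀))) :=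
    fun c d => continuous_const.mul
      (Real.continuous_exp.comp (continuous_const.mul (continuous_id.sub continuous_const)))
  have key : ∀ ε > (0:ℝ), ∀ δ', 0 < δ' → δ' < δ → ∀ t, t₀ ≤ t →
      V t < (M + ε) * Real.exp (-2 * δ' * (t - t₀)) := by
    intro ε hε δ' hδ'pos hδ'lt
    by_contra hcon
    push_neg at hcon
    obtain ⟨tb, htb, htb2⟩ := hcon
    set T : Set ℝ := {s | t₀ ≤ s ∧ (M + ε) * Real.exp (-2 * δ' * (s - t₀)) ≤ V s} with hT
    have hTne : T.Nonempty := ⟨tb, htb, htb2⟩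
    have hTclosed : IsClosed T := by
      have hrw : T = Set.Ici t₀ ∩ {s | (M + ε) * Real.exp (-2 * δ' * (s - t₀)) ≤ V s} := rfl
    -- closedness
      rw [hrw]
      exact isClosed_Ici.inter (isClosed_le (hcontU (M + ε) (-2 * δ')) hVcont)
    have hTbd : BddBelow T := ⟨t₀, fun s hs => hs.1⟩
    set t₁ := sInf T with ht₁def
    have ht₁T : t₁ ∈ T := hTclosed.csInf_mem hTne hTbd
    have ht₁ge : t₀ ≤ t₁ := ht₁T.1
    have ht₀T : t₀ ∉ T := by
      intro h
      have h2 := h.2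
      simp only [sub_self, mul_zero, Real.exp_zero, mul_one] at h2
      linarith [hVt₀M]
    have ht₁gt : t₀ < t₁ := lt_of_le_of_ne ht₁ge (fun h => ht₀T (h ▸ ht₁T))
    have hlt : ∀ s, t₀ ≤ s → s < t₁ →
        V s < (M + ε) * Real.exp (-2 * δ' * (s - t₀)) := by
      intro s hs hst
      by_contra hc
      push_neg at hc
      exact absurd (csInf_le hTbd ⟨hs, hc⟩) (not_le.mpr hst)
    have hVle : V t₁ ≤ (M + ε) * Real.exp (-2 * δ' * (t₁ - t₀)) := by
      have h1 : Tendsto V (𝓝[<] t₁) (𝓝 (V t₁)) :=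
        (hVcont.tendsto t₁).mono_left nhdsWithin_le_nhds
      have h2 : Tendsto (fun s => (M + ε) * Real.exp (-2 * δ' * (s - t₀))) (𝓝[<] t₁)
          (𝓝 ((M + ε) * Real.exp (-2 * δ' * (t₁ - t₀)))) :=
        ((hcontU (M + ε) (-2 * δ')).tendsto t₁).mono_left nhdsWithin_le_nhds
      refine le_of_tendsto_of_tendsto h1 h2 ?_
      filter_upwards [Ioo_mem_nhdsLT_of_mem (⟨ht₁gt, le_refl t₁⟩ : t₁ ∈ Set.Ioc t₀ t₁)]
        with s hs
      exact (hlt s hs.1.le hs.2).le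
    set E := Real.exp (-2 * δ' * (t₁ - t₀)) with hEdef
    have hEpos : 0 < E := Real.exp_pos _
    have hMε : (0:ℝ) < M + ε := by linarith
    -- derivative of the comparison function
    have hinner : HasDerivAt (fun s => -2 * δ' * (s - t₀)) (-2 * δ') t₁ := by
      simpa using ((hasDerivAt_id t₁).sub_const t₀).const_mul (-2 * δ')
    have hU : HasDerivAt (fun s => (M + ε) * Real.exp (-2 * δ' * (s - t₀)))
        ((M + ε) * (E * (-2 * δ'))) t₁ := hinner.exp.const_mul (M + ε)
    have hG : HasDerivAt (fun s => V s - (M + ε) * Real.exp (-2 * δ' * (s - t₀)))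
        (V' t₁ - (M + ε) * (E * (-2 * δ'))) t₁ := (hVderiv t₁ ht₁ge).sub hU
    have hge : 0 ≤ V' t₁ - (M + ε) * (E * (-2 * δ')) := by
      refine halanay_pos_left_deriv ht₁gt hG ?_ ?_
      · have := ht₁T.2
        simp only [sub_nonneg]
        exact this
      · intro s hs
        have := hlt s hs.1.le hs.2
        linarith
    -- bound the delayed supremum
    have hSup : sSup (V '' Set.Icc (t₁ - τM) t₁) ≤ (M + ε) * (Real.exp (2 * δ' * τM) * E) := by
      apply Real.sSup_le
      · rintro x ⟨s, hs, rfl⟩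
        rcases le_or_gt s t₀ with h | h
        · have hVsM : V s ≤ M := le_csSup hMbd ⟨s, ⟨⟨by linarith [hs.1], h⟩, rfl⟩⟩
          have h1 : (1:ℝ) ≤ Real.exp (2 * δ' * τM) * E := by
            rw [hEdef, ← Real.exp_add]
            apply Real.one_le_exp
            nlinarith [hs.1]
          nlinarith
        · have hVs : V s ≤ (M + ε) * Real.exp (-2 * δ' * (s - t₀)) := by
            rcases lt_or_eq_of_le hs.2 with h2 | h2
            · exact (hlt s h.le h2).le
            · rw [h2]; exact hVle
          have h2 : Real.exp (-2 * δ' * (s - t₀)) ≤ Real.exp (2 * δ' * τM) * E := by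
            rw [hEdef, ← Real.exp_add]
            apply Real.exp_le_exp.mpr
            nlinarith [hs.1]
          calc V s ≤ (M + ε) * Real.exp (-2 * δ' * (s - t₀)) := hVs
            _ ≤ (M + ε) * (Real.exp (2 * δ' * τM) * E) :=
                mul_le_mul_of_nonneg_left h2 hMε.le
      · positivity
    have hiq := hineq t₁ ht₁ge
    have hVeq : (M + ε) * E ≤ V t₁ := ht₁T.2
    have hc1 : -2 * δ₀ * V t₁ ≤ -2 * δ₀ * ((M + ε) * E) := by
      have := mul_le_mul_of_nonneg_left hVeq (by positivity : (0:ℝ) ≤ 2 * δ₀)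
      linarith
    have hc2 : δ₁ * sSup (V '' Set.Icc (t₁ - τM) t₁)
        ≤ δ₁ * ((M + ε) * (Real.exp (2 * δ' * τM) * E)) :=
      mul_le_mul_of_nonneg_left hSup hδ₁.le
    have hc3 : δ₁ * Real.exp (2 * δ' * τM) < 2 * δ₀ - 2 * δ' := by
      have hm : Real.exp (2 * δ' * τM) < Real.exp (2 * δ * τM) := by
        apply Real.exp_lt_exp.mpr
        nlinarith
      have hm2 : δ₁ * Real.exp (2 * δ' * τM) < δ₁ * Real.exp (2 * δ * τM) :=
        mul_lt_mul_of_pos_left hm hδ₁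
      linarith
    have hprod : 0 < (M + ε) * E * (2 * δ₀ - 2 * δ' - δ₁ * Real.exp (2 * δ' * τM)) :=
      mul_pos (mul_pos hMε hEpos) (by linarith)
    linarith [hge, hiq, hc1, hc2, hprod]
  -- pass to the limit
  intro t ht
  have stepA : ∀ δ', 0 < δ' → δ' < δ → V t ≤ M * Real.exp (-2 * δ' * (t - t₀)) := by
    intro δ' h1 h2
    have hexple : Real.exp (-2 * δ' * (t - t₀)) ≤ 1 := by
      apply Real.exp_le_one_iff.mpr
      nlinarith
    refine le_of_forall_pos_le_add ?_
    intro ε hε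
    have := key ε hε δ' h1 h2 t ht
    nlinarith [Real.exp_pos (-2 * δ' * (t - t₀))]
  have hlim : Tendsto (fun δ' => M * Real.exp (-2 * δ' * (t - t₀))) (𝓝[<] δ)
      (𝓝 (M * Real.exp (-2 * δ * (t - t₀)))) := by
    have hc : Continuous (fun δ' : ℝ => M * Real.exp (-2 * δ' * (t - t₀))) :=
      continuous_const.mul
        (Real.continuous_exp.comp ((continuous_const.mul continuous_id).mul continuous_const))
    exact (hc.tendsto δ).mono_left nhdsWithin_le_nhds
  have hfin : V t ≤ M * Real.exp (-2 * δ * (t - t₀)) := by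
    refine ge_of_tendsto hlim ?_
    filter_upwards [Ioo_mem_nhdsLT_of_mem (⟨half_lt_self hδpos, le_refl δ⟩ : δ ∈ Set.Ioc (δ/2) δ)]
      with δ' hδ'
    exact stepA δ' (by linarith [hδ'.1, hδpos]) hδ'.2
  linarith [hfin, mul_comm M (Real.exp (-2 * δ * (t - t₀)))]
end

section
/- Given δ > 0, K > δ, and a ≥ K²/(K-δ), the 3×3 symmetric matrix Φ with entries Φ₁₁ = -2K + 2δ, Φ₁₂ = 0, Φ₁₃ = K, Φ₂₂ = -2qa, Φ₂₃ = -qK, Φ₃₃ = -λ is negative semidefinite for λ = (a + Kq - δq)/2 and any q > 0 satisfying (K²/a - (K - δ)) q ≤ a - K²/(K - δ). -/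
/-- The matrix `Φ = [[-2K+2δ, 0, K], [0, -2qa, -qK], [K, -qK, -λ]]` is negative
semidefinite (i.e. `-Φ` is positive semidefinite) for `λ = (a + Kq - δq)/2` and any
`q > 0` with `(K²/a - (K-δ)) q ≤ a - K²/(K-δ)`, given `δ > 0`, `K > δ`, `a ≥ K²/(K-δ)`. -/
theorem Phi_negSemidef (δ K a q lam : ℝ) (hδ : 0 < δ) (hK : δ < K)
    (ha : K ^ 2 / (K - δ) ≤ a) (hq : 0 < q)
    (hqcond : (K ^ 2 / a - (K - δ)) * q ≤ a - K ^ 2 / (K - δ))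
    (hlam : lam = (a + K * q - δ * q) / 2) :
    (-(!![-2 * K + 2 * δ, 0, K; 0, -2 * q * a, -q * K; K, -q * K, -lam] :
        Matrix (Fin 3) (Fin 3) ℝ)).PosSemidef := by
  have hKδ : 0 < K - δ := sub_pos.2 hK
  have hK0 : 0 < K := hδ.trans hK
  have ha0 : 0 < a := lt_of_lt_of_le (div_pos (pow_pos hK0 2) hKδ) ha
  have key : q * (K ^ 2 * (K - δ) - a * (K - δ) ^ 2) ≤ a ^ 2 * (K - δ) - K ^ 2 * a := by
    have h := mul_le_mul_of_nonneg_right hqcond (mul_pos ha0 hKδ).le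
    field_simp at h
    nlinarith [h, mul_pos ha0 hKδ]
  refine Matrix.PosSemidef.of_dotProduct_mulVec_nonneg ?_ ?_
  · ext i j
    fin_cases i <;> fin_cases j <;>
      simp [Matrix.conjTranspose_apply]
  · intro x
    have hx0 := sq_nonneg (2 * (K - δ) * x 0 - K * x 2)
    have hx1 := sq_nonneg (2 * a * x 1 + K * x 2)
    have hx2 := sq_nonneg (x 2)
    simp only [Matrix.mulVec, dotProduct, Fin.sum_univ_three, Matrix.neg_apply,
      Matrix.cons_val', Matrix.cons_val_zero, Matrix.cons_val_one, Matrix.head_cons,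
      Matrix.empty_val', Matrix.cons_val_fin_one, Matrix.head_fin_const, Pi.neg_apply,
      RCLike.star_def, starRingEnd_apply, star_trivial, Matrix.cons_val_two, Matrix.tail_cons,
      Matrix.of_apply]
    subst hlam
    nlinarith [mul_pos ha0 hKδ, mul_nonneg ha0.le hx0, mul_nonneg hq.le (mul_nonneg hKδ.le hx1),
      mul_nonneg hx2 (by linarith [key] : (0:ℝ) ≤ a ^ 2 * (K - δ) - K ^ 2 * a - q * (K ^ 2 * (K - δ) - a * (K - δ) ^ 2))]
end

section
/- Let e : [0, 2π] × [0, ∞) → ℝ be a classical solution of the heat equation with pointwise feedback e_t = a e_{xx} - K e(π, t), with periodic boundary conditions e(0,t) = e(2π,t), e_x(0,t) = e_x(2π,t), where K > δ > 0 and a ≥ K²/(K - δ). Then the functional V(t) = ∫_0^{2π} e(x,t)² dx + q ∫_0^{2π} e_x(x,t)² dx (with q > 0 chosen so that (K²/a - (K-δ))q ≤ a - K²/(K-δ)) satisfies V'(t) + 2δ V(t) ≤ 0 for all t ≥ 0, and hence V(t) ≤ e^{-2δt} V(0). -/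
open MeasureTheory intervalIntegral

open Set Filter Topology

/-- Clairaut-type theorem: if `∂ₓe = ex`, `∂ₜe = et`, `∂ₜex = etx` with `etx`
jointly continuous, then `∂ₓ(et) = etx`. -/
lemma clairaut_dir (e ex et etx : ℝ → ℝ → ℝ)
    (hex : ∀ t x, HasDerivAt (fun y => e y t) (ex x t) x)
    (het : ∀ x t, HasDerivAt (fun s => e x s) (et x t) t)
    (hetx : ∀ x t, HasDerivAt (fun s => ex x s) (etx x t) t)
    (hetx_cont : Continuous fun p : ℝ × ℝ => etx p.1 p.2)
    (x₀ t₀ : ℝ) :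
    HasDerivAt (fun y => et y t₀) (etx x₀ t₀) x₀ := by
  have claim : ∀ ε > (0:ℝ), ∃ δ > (0:ℝ), ∀ x : ℝ, x ≠ x₀ → |x - x₀| < δ →
      |(et x t₀ - et x₀ t₀)/(x - x₀) - etx x₀ t₀| ≤ ε := by
    intro ε hε
    obtain ⟨δ, hδ, hcont⟩ := Metric.continuousAt_iff.mp (hetx_cont.continuousAt
      (x := ((x₀ : ℝ), (t₀ : ℝ)))) ε hε
    refine ⟨δ, hδ, ?_⟩
    intro x hne hxδ
    have hxx : x - x₀ ≠ 0 := sub_ne_zero.mpr hne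
    have hDD : ∀ k : ℝ, k ≠ 0 → |k| < δ →
        |((e x (t₀+k) - e x t₀) - (e x₀ (t₀+k) - e x₀ t₀))/(x - x₀)/k
          - etx x₀ t₀| ≤ ε := by
      intro k hk hkδ
      have hg : ∀ y, HasDerivAt (fun y => e y (t₀+k) - e y t₀)
          (ex y (t₀+k) - ex y t₀) y := fun y => (hex (t₀+k) y).sub (hex t₀ y)
      have hgc : ∀ a b : ℝ, ContinuousOn (fun y => e y (t₀+k) - e y t₀) (Icc a b) :=
        fun a b => (continuous_iff_continuousAt.mpr fun y => (hg y).continuousAt).continuousOn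
      have hMVT1 : ∃ ξ : ℝ, |ξ - x₀| < |x - x₀| ∧
          ex ξ (t₀+k) - ex ξ t₀
            = ((e x (t₀+k) - e x t₀) - (e x₀ (t₀+k) - e x₀ t₀))/(x - x₀) := by
        rcases lt_or_gt_of_ne hne with h | h
        · obtain ⟨ξ, hξ, heq⟩ := exists_hasDerivAt_eq_slope (fun y => e y (t₀+k) - e y t₀)
            (fun y => ex y (t₀+k) - ex y t₀) h (hgc x x₀) (fun y _ => hg y)
          refine ⟨ξ, ?_, ?_⟩
          · rw [abs_of_neg (by linarith : x - x₀ < 0), abs_sub_lt_iff]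
            exact ⟨by linarith [hξ.1, hξ.2], by linarith [hξ.1, hξ.2]⟩
          · rw [heq]
            rw [show x - x₀ = -(x₀ - x) by ring]
            rw [show (e x (t₀ + k) - e x t₀) - (e x₀ (t₀ + k) - e x₀ t₀)
              = -((e x₀ (t₀+k) - e x₀ t₀) - (e x (t₀+k) - e x t₀)) by ring]
            rw [neg_div_neg_eq]
        · obtain ⟨ξ, hξ, heq⟩ := exists_hasDerivAt_eq_slope (fun y => e y (t₀+k) - e y t₀)
            (fun y => ex y (t₀+k) - ex y t₀) h (hgc x₀ x) (fun y _ => hg y)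
          refine ⟨ξ, ?_, ?_⟩
          · rw [abs_of_pos (by linarith : 0 < x - x₀), abs_sub_lt_iff]
            exact ⟨by linarith [hξ.1, hξ.2], by linarith [hξ.1, hξ.2]⟩
          · rw [heq]
      obtain ⟨ξ, hξx, hξeq⟩ := hMVT1
      have hexc : ContinuousOn (fun s => ex ξ s) (Icc (min t₀ (t₀+k)) (max t₀ (t₀+k))) :=
        (continuous_iff_continuousAt.mpr fun s => (hetx ξ s).continuousAt).continuousOn
      have hMVT2 : ∃ τ : ℝ, |τ - t₀| < |k| ∧
          etx ξ τ = (ex ξ (t₀+k) - ex ξ t₀)/k := by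
        rcases lt_or_gt_of_ne hk with h | h
        · obtain ⟨τ, hτ, heq⟩ := exists_hasDerivAt_eq_slope (fun s => ex ξ s)
            (fun s => etx ξ s) (by linarith : t₀ + k < t₀)
            ((continuous_iff_continuousAt.mpr fun s => (hetx ξ s).continuousAt).continuousOn)
            (fun s _ => hetx ξ s)
          refine ⟨τ, ?_, ?_⟩
          · rw [abs_of_neg (by linarith : k < 0), abs_sub_lt_iff]
            exact ⟨by linarith [hτ.1, hτ.2], by linarith [hτ.1, hτ.2]⟩
          · rw [heq]
            rw [show t₀ - (t₀ + k) = -k by ring]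
            rw [show ex ξ t₀ - ex ξ (t₀ + k) = -(ex ξ (t₀+k) - ex ξ t₀) by ring]
            rw [neg_div_neg_eq]
        · obtain ⟨τ, hτ, heq⟩ := exists_hasDerivAt_eq_slope (fun s => ex ξ s)
            (fun s => etx ξ s) (by linarith : t₀ < t₀ + k)
            ((continuous_iff_continuousAt.mpr fun s => (hetx ξ s).continuousAt).continuousOn)
            (fun s _ => hetx ξ s)
          refine ⟨τ, ?_, ?_⟩
          · rw [abs_of_pos (by linarith : 0 < k), abs_sub_lt_iff]
            exact ⟨by linarith [hτ.1, hτ.2], by linarith [hτ.1, hτ.2]⟩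
          · rw [heq]
            congr 1
            ring
      obtain ⟨τ, hτt, hτeq⟩ := hMVT2
      have hval : ((e x (t₀+k) - e x t₀) - (e x₀ (t₀+k) - e x₀ t₀))/(x - x₀)/k
          = etx ξ τ := by rw [hτeq, ← hξeq]
      rw [hval]
      have hdist : dist (ξ, τ) ((x₀ : ℝ), (t₀ : ℝ)) < δ := by
        rw [Prod.dist_eq]
        apply max_lt
        · rw [Real.dist_eq]; exact lt_trans hξx hxδ
        · rw [Real.dist_eq]; exact lt_trans hτt hkδ
      have := hcont hdist
      rw [Real.dist_eq] at this
      exact this.le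
    -- limit as k → 0
    have hshift : Tendsto (fun k : ℝ => t₀ + k) (𝓝[≠] (0:ℝ)) (𝓝[≠] t₀) := by
      rw [tendsto_nhdsWithin_iff]
      constructor
      · have h := (show Tendsto (fun k : ℝ => t₀ + k) (𝓝 0) (𝓝 (t₀ + 0)) from
          (continuous_const.add continuous_id).tendsto (0:ℝ))
        rw [add_zero] at h
        exact h.mono_left nhdsWithin_le_nhds
      · filter_upwards [eventually_mem_nhdsWithin] with k hk
        simpa using hk
    have hslope : ∀ y : ℝ, Tendsto (fun k : ℝ => (e y (t₀+k) - e y t₀)/k)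
        (𝓝[≠] (0:ℝ)) (𝓝 (et y t₀)) := by
      intro y
      have h1 := (hasDerivAt_iff_tendsto_slope.mp (het y t₀)).comp hshift
      apply h1.congr'
      filter_upwards [eventually_mem_nhdsWithin] with k hk
      simp only [Function.comp, slope_def_field]
      rw [show t₀ + k - t₀ = k by ring]
    have hL : Tendsto
        (fun k : ℝ => ((e x (t₀+k) - e x t₀) - (e x₀ (t₀+k) - e x₀ t₀))/(x - x₀)/k)
        (𝓝[≠] (0:ℝ)) (𝓝 ((et x t₀ - et x₀ t₀)/(x - x₀))) := by
      have h2 := ((hslope x).sub (hslope x₀)).div_const (x - x₀)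
      apply h2.congr'
      filter_upwards [] with k
      ring
    have hev : ∀ᶠ k in 𝓝[≠] (0:ℝ),
        |((e x (t₀+k) - e x t₀) - (e x₀ (t₀+k) - e x₀ t₀))/(x - x₀)/k - etx x₀ t₀| ≤ ε := by
      have hmem : Ioo (-δ) δ ∈ 𝓝[≠] (0:ℝ) :=
        nhdsWithin_le_nhds (Ioo_mem_nhds (by linarith) hδ)
      filter_upwards [hmem, eventually_mem_nhdsWithin] with k hk1 hk2
      exact hDD k hk2 (abs_lt.mpr ⟨hk1.1, hk1.2⟩)
    have habs := (Filter.Tendsto.abs (hL.sub_const (etx x₀ t₀)))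
    exact le_of_tendsto habs hev
  rw [hasDerivAt_iff_tendsto_slope, Metric.tendsto_nhdsWithin_nhds]
  intro ε hε
  obtain ⟨δ, hδ, hc⟩ := claim (ε/2) (by linarith)
  refine ⟨δ, hδ, ?_⟩
  intro x hx hdist
  rw [Real.dist_eq] at hdist ⊢
  have h1 := hc x hx hdist
  rw [slope_def_field]
  linarith

/-- Core sharp Wirtinger-type inequality, "two-piece" version, Dirichlet at right end. -/
lemma wirt_core (A s B : ℝ) (hAs : A ≤ s) (hsB : s < B)
    (f₁ f₂ f₁' f₂' : ℝ → ℝ)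
    (hd₁ : ∀ x, HasDerivAt f₁ (f₁' x) x) (hd₂ : ∀ x, HasDerivAt f₂ (f₂' x) x)
    (hc₁ : Continuous f₁') (hc₂ : Continuous f₂')
    (hm : f₁ s = f₂ s) (hB : f₂ B = 0) :
    (∫ x in A..s, f₁ x ^ 2) + (∫ x in s..B, f₂ x ^ 2)
      ≤ (2 * (B - A) / Real.pi) ^ 2 *
        ((∫ x in A..s, f₁' x ^ 2) + (∫ x in s..B, f₂' x ^ 2)) := by
  have hAB : A < B := lt_of_le_of_lt hAs hsB
  have hL : 0 < B - A := by linarith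
  have hπ : (0:ℝ) < Real.pi := Real.pi_pos
  set k : ℝ := Real.pi / (2 * (B - A)) with hk_def
  have hk : 0 < k := by positivity
  have hkB : k * (B - A) = Real.pi / 2 := by
    rw [hk_def]; field_simp
  set lam : ℝ → ℝ := fun x => -(k * Real.tan (k * (x - A))) with hlam_def
  have hcos : ∀ x, A ≤ x → x < B → 0 < Real.cos (k * (x - A)) := by
    intro x hx1 hx2
    apply Real.cos_pos_of_mem_Ioo
    constructor
    · have h0 : 0 ≤ k * (x - A) := by
        apply mul_nonneg hk.le; linarith
      linarith
    · have : k * (x - A) < k * (B - A) := by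
        apply mul_lt_mul_of_pos_left _ hk; linarith
      rw [hkB] at this; exact this
  have hlamA : lam A = 0 := by simp [hlam_def]
  have hlam_deriv : ∀ x, A ≤ x → x < B → HasDerivAt lam (-(k^2 + lam x ^ 2)) x := by
    intro x hx1 hx2
    have hc := (hcos x hx1 hx2).ne'
    have h1 : HasDerivAt (fun y : ℝ => k * (y - A)) k x := by
      simpa using ((hasDerivAt_id x).sub_const A).const_mul k
    have h2 := (Real.hasDerivAt_tan hc).comp x h1
    have h3 : HasDerivAt lam (-(k * (1 / Real.cos (k * (x - A)) ^ 2 * k))) x :=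
      (h2.const_mul k).neg
    convert h3 using 1
    have hpy : Real.sin (k*(x-A))^2 + Real.cos (k*(x-A))^2 = 1 := Real.sin_sq_add_cos_sq _
    simp only [hlam_def, Real.tan_eq_sin_div_cos]
    field_simp; norm_num
  -- continuity of f₁ f₂ and lam
  have hf₁c : Continuous f₁ := continuous_iff_continuousAt.mpr fun x => (hd₁ x).continuousAt
  have hf₂c : Continuous f₂ := continuous_iff_continuousAt.mpr fun x => (hd₂ x).continuousAt
  -- key sublemma on subintervals [u,v] ⊆ [A,B)
  have key : ∀ u v : ℝ, A ≤ u → u ≤ v → v < B → ∀ g g' : ℝ → ℝ,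
      (∀ x, HasDerivAt g (g' x) x) → Continuous g' →
      k^2 * (∫ x in u..v, g x ^ 2) ≤ (∫ x in u..v, g' x ^ 2)
        - (lam v * g v ^ 2 - lam u * g u ^ 2) := by
    intro u v hu huv hv g g' hg hg'c
    have hgc : Continuous g := continuous_iff_continuousAt.mpr fun x => (hg x).continuousAt
    have hsub : uIcc u v ⊆ Icc u v := by rw [uIcc_of_le huv]
    have hlamc : ContinuousOn lam (uIcc u v) := by
      intro x hx
      have hx' := hsub hx
      exact ((hlam_deriv x (le_trans hu hx'.1) (lt_of_le_of_lt hx'.2 hv)).continuousAt).continuousWithinAt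
    set D : ℝ → ℝ := fun x => -(k^2 + lam x ^2) * g x ^2 + lam x * (2 * g x * g' x) with hD_def
    have hDc : ContinuousOn D (uIcc u v) := by
      apply ContinuousOn.add
      · exact (((continuousOn_const.add (hlamc.pow 2)).neg).mul ((hgc.pow 2).continuousOn))
      · exact hlamc.mul (((continuous_const.mul hgc).mul hg'c).continuousOn)
    have hDint : IntervalIntegrable D volume u v := hDc.intervalIntegrable
    have hFTC : ∫ x in u..v, D x = lam v * g v ^2 - lam u * g u ^2 := by
      apply intervalIntegral.integral_eq_sub_of_hasDerivAt
      · intro x hx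
        have hx' := hsub hx
        have hdd := (hlam_deriv x (le_trans hu hx'.1) (lt_of_le_of_lt hx'.2 hv)).mul ((hg x).pow 2)
        simpa [hD_def, pow_one] using (show HasDerivAt (fun v => lam v * g v ^ 2) _ x from hdd)
      · exact hDint
    have h0 : 0 ≤ ∫ x in u..v, (g' x - lam x * g x)^2 :=
      intervalIntegral.integral_nonneg huv (fun x _ => sq_nonneg _)
    have hsplit : (∫ x in u..v, (g' x - lam x * g x)^2)
        = (∫ x in u..v, g' x ^2) - (∫ x in u..v, D x) - k^2 * ∫ x in u..v, g x ^2 := by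
      rw [← intervalIntegral.integral_const_mul, ← intervalIntegral.integral_sub
        (show IntervalIntegrable (fun x => g' x ^ 2) volume u v from ((hg'c.pow 2)).intervalIntegrable u v) hDint,
        ← intervalIntegral.integral_sub
          ((show IntervalIntegrable (fun x => g' x ^ 2) volume u v from ((hg'c.pow 2)).intervalIntegrable u v).sub hDint)
          (show IntervalIntegrable (fun x => k^2 * g x ^ 2) volume u v from (continuous_const.mul (hgc.pow 2)).intervalIntegrable u v)]
      apply intervalIntegral.integral_congr
      intro x hx
      simp only [hD_def]
      ring
    rw [hsplit, hFTC] at h0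
    linarith
  -- bound on f₂ near B
  obtain ⟨M, hM⟩ := (isCompact_Icc : IsCompact (Icc s B)).exists_bound_of_continuousOn hc₂.continuousOn
  have hptb : ∀ x ∈ Ico s B, f₂ x ^ 2 ≤ (M * (B - x))^2 := by
    intro x hx
    have hseg := norm_image_sub_le_of_norm_deriv_le_segment'
      (f := f₂) (f' := f₂') (a := x) (b := B)
      (fun y hy => (hd₂ y).hasDerivWithinAt)
      (fun y hy => hM y ⟨le_trans hx.1 hy.1, hy.2.le⟩) B ⟨hx.2.le, le_refl B⟩
    rw [hB] at hseg
    have habs : |f₂ x| ≤ M * (B - x) := by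
      simpa [abs_neg] using hseg
    calc f₂ x ^2 = |f₂ x|^2 := (sq_abs _).symm
      _ ≤ (M * (B - x))^2 := by
          apply pow_le_pow_left₀ (abs_nonneg _) habs
  have hbd : ∀ x ∈ Ico s B, -(lam x * f₂ x ^2) ≤ M^2 * (B - x) := by
    intro x hx
    have hxB : x < B := hx.2
    have hAx : A ≤ x := le_trans hAs hx.1
    have hMnn : 0 ≤ M := le_trans (norm_nonneg _) (hM s ⟨le_refl s, hsB.le⟩)
    rcases eq_or_lt_of_le hAx with h | h
    · have : lam x = 0 := by rw [← h]; exact hlamA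
      rw [this]
      have : (0:ℝ) ≤ M^2 * (B - x) := by
        apply mul_nonneg (sq_nonneg _); linarith
      simpa using this
    · set u := k * (B - x) with hu_def
      have hu0 : 0 < u := by apply mul_pos hk; linarith
      have huπ : u < Real.pi / 2 := by
        rw [← hkB, hu_def]
        apply mul_lt_mul_of_pos_left _ hk; linarith
      have htu : u < Real.tan u := Real.lt_tan hu0 huπ
      have htan : Real.tan (k * (x - A)) = (Real.tan u)⁻¹ := by
        rw [← Real.tan_pi_div_two_sub]
        congr 1
        rw [← hkB, hu_def]; ring
      have h2 : (Real.tan u)⁻¹ ≤ u⁻¹ := by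
        apply inv_anti₀ hu0 htu.le
      have hstep : -(lam x * f₂ x ^2) ≤ (k * u⁻¹) * (M * (B - x))^2 := by
        have hlhs : -(lam x * f₂ x ^2) = (k * Real.tan (k * (x - A))) * f₂ x ^2 := by
          simp only [hlam_def]; ring
        rw [hlhs, htan]
        apply mul_le_mul
        · exact mul_le_mul_of_nonneg_left h2 hk.le
        · exact hptb x hx
        · exact sq_nonneg _
        · positivity
      calc -(lam x * f₂ x ^2) ≤ (k * u⁻¹) * (M * (B - x))^2 := hstep
        _ = M^2 * (B - x) := by
            rw [hu_def]
            have hBx : B - x ≠ 0 := sub_ne_zero.mpr (ne_of_gt hxB)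
            field_simp
  -- the main estimate for x ∈ [s, B)
  have main : ∀ x ∈ Ico s B,
      k^2 * ((∫ y in A..s, f₁ y ^2) + (∫ y in s..x, f₂ y ^2))
        ≤ ((∫ y in A..s, f₁' y ^2) + (∫ y in s..x, f₂' y ^2)) + M^2 * (B - x) := by
    intro x hx
    have k1 := key A s (le_refl A) hAs hsB f₁ f₁' hd₁ hc₁
    have k2 := key s x hAs hx.1 hx.2 f₂ f₂' hd₂ hc₂
    have hb := hbd x hx
    rw [hlamA, hm] at k1
    rw [mul_add]
    linarith
  -- take the limit x → B⁻
  have hprim1 : Continuous (fun x => ∫ y in s..x, f₂ y ^2) :=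
    intervalIntegral.continuous_primitive (fun a b => ((hf₂c.pow 2)).intervalIntegrable a b) s
  have hprim2 : Continuous (fun x => ∫ y in s..x, f₂' y ^2) :=
    intervalIntegral.continuous_primitive (fun a b => ((hc₂.pow 2)).intervalIntegrable a b) s
  have T1 : Tendsto (fun x => k^2 * ((∫ y in A..s, f₁ y ^2) + (∫ y in s..x, f₂ y ^2)))
      (𝓝[<] B) (𝓝 (k^2 * ((∫ y in A..s, f₁ y ^2) + (∫ y in s..B, f₂ y ^2)))) :=
    ((continuous_const.mul (continuous_const.add hprim1)).tendsto B).mono_left nhdsWithin_le_nhds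
  have T2 : Tendsto (fun x => ((∫ y in A..s, f₁' y ^2) + (∫ y in s..x, f₂' y ^2)) + M^2 * (B - x))
      (𝓝[<] B) (𝓝 (((∫ y in A..s, f₁' y ^2) + (∫ y in s..B, f₂' y ^2)) + M^2 * (B - B))) :=
    (((continuous_const.add hprim2).add
      (continuous_const.mul (continuous_const.sub continuous_id))).tendsto B).mono_left nhdsWithin_le_nhds
  have hev : ∀ᶠ x in 𝓝[<] B, k^2 * ((∫ y in A..s, f₁ y ^2) + (∫ y in s..x, f₂ y ^2))
      ≤ ((∫ y in A..s, f₁' y ^2) + (∫ y in s..x, f₂' y ^2)) + M^2 * (B - x) :=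
    Filter.eventually_of_mem (Ico_mem_nhdsLT_of_mem ⟨hsB, le_refl B⟩) main
  have hfin : k^2 * ((∫ y in A..s, f₁ y ^2) + (∫ y in s..B, f₂ y ^2))
      ≤ ((∫ y in A..s, f₁' y ^2) + (∫ y in s..B, f₂' y ^2)) + M^2 * (B - B) :=
    le_of_tendsto_of_tendsto T1 T2 hev
  have hfin' : k^2 * ((∫ y in A..s, f₁ y ^2) + (∫ y in s..B, f₂ y ^2))
      ≤ ((∫ y in A..s, f₁' y ^2) + (∫ y in s..B, f₂' y ^2)) := by
    simpa using hfin
  have hkk : (2 * (B - A) / Real.pi) ^ 2 * ((∫ y in A..s, f₁' y ^2) + (∫ y in s..B, f₂' y ^2))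
      = ((∫ y in A..s, f₁' y ^2) + (∫ y in s..B, f₂' y ^2)) / k^2 := by
    rw [hk_def]
    field_simp
  rw [hkk, le_div_iff₀ (by positivity : (0:ℝ) < k^2)]
  linarith

/-- Two-piece sharp Wirtinger inequality, Dirichlet at the left end. -/
lemma wirt_core_left (A s B : ℝ) (hAs : A < s) (hsB : s ≤ B)
    (f₁ f₂ f₁' f₂' : ℝ → ℝ)
    (hd₁ : ∀ x, HasDerivAt f₁ (f₁' x) x) (hd₂ : ∀ x, HasDerivAt f₂ (f₂' x) x)
    (hc₁ : Continuous f₁') (hc₂ : Continuous f₂')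
    (hm : f₁ s = f₂ s) (hA : f₁ A = 0) :
    (∫ x in A..s, f₁ x ^ 2) + (∫ x in s..B, f₂ x ^ 2)
      ≤ (2 * (B - A) / Real.pi) ^ 2 *
        ((∫ x in A..s, f₁' x ^ 2) + (∫ x in s..B, f₂' x ^ 2)) := by
  set c : ℝ := A + B with hc_def
  have href : ∀ x : ℝ, HasDerivAt (fun y : ℝ => c - y) (-1) x := fun x =>
    (hasDerivAt_id x).const_sub c
  have hdg₁ : ∀ x, HasDerivAt (fun y => f₂ (c - y)) (-f₂' (c - x)) x := fun x => by
    simpa using (show HasDerivAt (fun y => f₂ (c - y)) _ x from (hd₂ (c - x)).comp x (href x))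
  have hdg₂ : ∀ x, HasDerivAt (fun y => f₁ (c - y)) (-f₁' (c - x)) x := fun x => by
    simpa using (show HasDerivAt (fun y => f₁ (c - y)) _ x from (hd₁ (c - x)).comp x (href x))
  have hcg₁ : Continuous fun x : ℝ => -f₂' (c - x) :=
    (hc₂.comp (continuous_const.sub continuous_id)).neg
  have hcg₂ : Continuous fun x : ℝ => -f₁' (c - x) :=
    (hc₁.comp (continuous_const.sub continuous_id)).neg
  have h := wirt_core A (c - s) B (by simp [hc_def]; linarith) (by simp [hc_def]; linarith)
    (fun y => f₂ (c - y)) (fun y => f₁ (c - y))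
    (fun x => -f₂' (c - x)) (fun x => -f₁' (c - x))
    hdg₁ hdg₂ hcg₁ hcg₂
    (by simp [hc_def]; exact hm.symm)
    (by simpa [hc_def] using hA)
  have e1 : (∫ x in A..(c - s), (f₂ (c - x)) ^ 2) = ∫ x in s..B, f₂ x ^ 2 := by
    rw [show (∫ x in A..(c - s), (f₂ (c - x)) ^ 2)
        = ∫ x in A..(c - s), (fun y => f₂ y ^ 2) (c - x) from rfl,
      intervalIntegral.integral_comp_sub_left (fun y => f₂ y ^ 2) c]
    congr 1 <;> rw [hc_def] <;> ring
  have e2 : (∫ x in (c - s)..B, (f₁ (c - x)) ^ 2) = ∫ x in A..s, f₁ x ^ 2 := by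
    rw [show (∫ x in (c - s)..B, (f₁ (c - x)) ^ 2)
        = ∫ x in (c - s)..B, (fun y => f₁ y ^ 2) (c - x) from rfl,
      intervalIntegral.integral_comp_sub_left (fun y => f₁ y ^ 2) c]
    congr 1 <;> rw [hc_def] <;> ring
  have e3 : (∫ x in A..(c - s), (-f₂' (c - x)) ^ 2) = ∫ x in s..B, f₂' x ^ 2 := by
    rw [show (∫ x in A..(c - s), (-f₂' (c - x)) ^ 2)
        = ∫ x in A..(c - s), (fun y => f₂' y ^ 2) (c - x) from by
          congr 1; funext x; simp [neg_sq],
      intervalIntegral.integral_comp_sub_left (fun y => f₂' y ^ 2) c]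
    congr 1 <;> rw [hc_def] <;> ring
  have e4 : (∫ x in (c - s)..B, (-f₁' (c - x)) ^ 2) = ∫ x in A..s, f₁' x ^ 2 := by
    rw [show (∫ x in (c - s)..B, (-f₁' (c - x)) ^ 2)
        = ∫ x in (c - s)..B, (fun y => f₁' y ^ 2) (c - x) from by
          congr 1; funext x; simp [neg_sq],
      intervalIntegral.integral_comp_sub_left (fun y => f₁' y ^ 2) c]
    congr 1 <;> rw [hc_def] <;> ring
  rw [e1, e2, e3, e4] at h
  linarith

/-- Wirtinger inequality for a function vanishing at π, on [0, 2π], constant 4. -/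
lemma wirt_sigma (g g' : ℝ → ℝ) (hd : ∀ x, HasDerivAt g (g' x) x)
    (hc : Continuous g') (hzero : g Real.pi = 0) :
    ∫ x in (0:ℝ)..(2*Real.pi), g x ^ 2 ≤ 4 * ∫ x in (0:ℝ)..(2*Real.pi), g' x ^ 2 := by
  have hπ := Real.pi_pos
  have hgc : Continuous g := continuous_iff_continuousAt.mpr fun x => (hd x).continuousAt
  have h1 := wirt_core 0 0 Real.pi (le_refl 0) hπ g g g' g' hd hd hc hc rfl hzero
  have h2 := wirt_core_left Real.pi (2*Real.pi) (2*Real.pi) (by linarith) (le_refl _)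
    g g g' g' hd hd hc hc rfl hzero
  have c1 : (2 * (Real.pi - 0) / Real.pi) ^ 2 = 4 := by
    field_simp; norm_num; ring
  have c2 : (2 * (2*Real.pi - Real.pi) / Real.pi) ^ 2 = 4 := by
    rw [show 2*Real.pi - Real.pi = Real.pi by ring]
    field_simp; norm_num
  rw [c1] at h1
  rw [c2] at h2
  simp only [intervalIntegral.integral_same, zero_add, add_zero] at h1 h2
  have s1 : (∫ x in (0:ℝ)..Real.pi, g x ^2) + ∫ x in Real.pi..(2*Real.pi), g x ^2
      = ∫ x in (0:ℝ)..(2*Real.pi), g x ^2 :=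
    intervalIntegral.integral_add_adjacent_intervals
      ((hgc.pow 2).intervalIntegrable _ _) ((hgc.pow 2).intervalIntegrable _ _)
  have s2 : (∫ x in (0:ℝ)..Real.pi, g' x ^2) + ∫ x in Real.pi..(2*Real.pi), g' x ^2
      = ∫ x in (0:ℝ)..(2*Real.pi), g' x ^2 :=
    intervalIntegral.integral_add_adjacent_intervals
      ((hc.pow 2).intervalIntegrable _ _) ((hc.pow 2).intervalIntegrable _ _)
  linarith

/-- Wirtinger inequality on the "circle": `g 0 = g (2π)` and `g ξ = 0` for
some `ξ ∈ (0, 2π)` with `ξ ≤ π`. -/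
lemma wirt_circle_aux (g g' : ℝ → ℝ) (hd : ∀ x, HasDerivAt g (g' x) x)
    (hc : Continuous g') (hper : g 0 = g (2*Real.pi))
    (ξ : ℝ) (hξ0 : 0 < ξ) (hξπ : ξ ≤ Real.pi) (hz : g ξ = 0) :
    ∫ x in (0:ℝ)..(2*Real.pi), g x ^ 2 ≤ 4 * ∫ x in (0:ℝ)..(2*Real.pi), g' x ^ 2 := by
  have hπ := Real.pi_pos
  have hgc : Continuous g := continuous_iff_continuousAt.mpr fun x => (hd x).continuousAt
  -- shifted copies
  have hdh : ∀ y, HasDerivAt (fun y => g (y - 2*Real.pi)) (g' (y - 2*Real.pi)) y := fun y => by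
    simpa using (show HasDerivAt (fun y => g (y - 2*Real.pi)) _ y from (hd (y - 2*Real.pi)).comp y ((hasDerivAt_id y).sub_const (2*Real.pi)))
  have hch : Continuous fun y : ℝ => g' (y - 2*Real.pi) :=
    hc.comp (continuous_id.sub continuous_const)
  -- middle piece [ξ, ξ+π]
  have h1 := wirt_core_left ξ (ξ + Real.pi) (ξ + Real.pi) (by linarith) (le_refl _)
    g g g' g' hd hd hc hc rfl hz
  have c1 : (2 * (ξ + Real.pi - ξ) / Real.pi) ^ 2 = 4 := by
    rw [show ξ + Real.pi - ξ = Real.pi by ring]; field_simp; norm_num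
  rw [c1] at h1
  simp only [intervalIntegral.integral_same, add_zero] at h1
  -- wrapped piece [ξ+π, ξ+2π] with seam at 2π
  have h2 := wirt_core (ξ + Real.pi) (2*Real.pi) (ξ + 2*Real.pi) (by linarith) (by linarith)
    g (fun y => g (y - 2*Real.pi)) g' (fun y => g' (y - 2*Real.pi))
    hd hdh hc hch (by simpa using hper.symm) (by simpa using hz)
  have c2 : (2 * (ξ + 2*Real.pi - (ξ + Real.pi)) / Real.pi) ^ 2 = 4 := by
    rw [show ξ + 2*Real.pi - (ξ + Real.pi) = Real.pi by ring]; field_simp; norm_num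
  rw [c2] at h2
  have e1 : (∫ x in (2*Real.pi)..(ξ + 2*Real.pi), (g (x - 2*Real.pi)) ^ 2)
      = ∫ x in (0:ℝ)..ξ, g x ^ 2 := by
    rw [show (∫ x in (2*Real.pi)..(ξ + 2*Real.pi), (g (x - 2*Real.pi)) ^ 2)
        = ∫ x in (2*Real.pi)..(ξ + 2*Real.pi), (fun y => g y ^ 2) (x - 2*Real.pi) from rfl,
      intervalIntegral.integral_comp_sub_right (fun y => g y ^ 2) (2*Real.pi)]
    congr 1 <;> ring
  have e2 : (∫ x in (2*Real.pi)..(ξ + 2*Real.pi), (g' (x - 2*Real.pi)) ^ 2)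
      = ∫ x in (0:ℝ)..ξ, g' x ^ 2 := by
    rw [show (∫ x in (2*Real.pi)..(ξ + 2*Real.pi), (g' (x - 2*Real.pi)) ^ 2)
        = ∫ x in (2*Real.pi)..(ξ + 2*Real.pi), (fun y => g' y ^ 2) (x - 2*Real.pi) from rfl,
      intervalIntegral.integral_comp_sub_right (fun y => g' y ^ 2) (2*Real.pi)]
    congr 1 <;> ring
  rw [e1, e2] at h2
  -- decompose the full integrals
  have s1a : (∫ x in (0:ℝ)..ξ, g x ^2) + ∫ x in ξ..(2*Real.pi), g x ^2
      = ∫ x in (0:ℝ)..(2*Real.pi), g x ^2 :=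
    intervalIntegral.integral_add_adjacent_intervals
      ((hgc.pow 2).intervalIntegrable _ _) ((hgc.pow 2).intervalIntegrable _ _)
  have s1b : (∫ x in ξ..(ξ + Real.pi), g x ^2) + ∫ x in (ξ + Real.pi)..(2*Real.pi), g x ^2
      = ∫ x in ξ..(2*Real.pi), g x ^2 :=
    intervalIntegral.integral_add_adjacent_intervals
      ((hgc.pow 2).intervalIntegrable _ _) ((hgc.pow 2).intervalIntegrable _ _)
  have s2a : (∫ x in (0:ℝ)..ξ, g' x ^2) + ∫ x in ξ..(2*Real.pi), g' x ^2
      = ∫ x in (0:ℝ)..(2*Real.pi), g' x ^2 :=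
    intervalIntegral.integral_add_adjacent_intervals
      ((hc.pow 2).intervalIntegrable _ _) ((hc.pow 2).intervalIntegrable _ _)
  have s2b : (∫ x in ξ..(ξ + Real.pi), g' x ^2) + ∫ x in (ξ + Real.pi)..(2*Real.pi), g' x ^2
      = ∫ x in ξ..(2*Real.pi), g' x ^2 :=
    intervalIntegral.integral_add_adjacent_intervals
      ((hc.pow 2).intervalIntegrable _ _) ((hc.pow 2).intervalIntegrable _ _)
  linarith

/-- Wirtinger on the circle: `g 0 = g (2π)`, `g ξ = 0` for some `ξ ∈ (0,2π)`. -/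
lemma wirt_circle (g g' : ℝ → ℝ) (hd : ∀ x, HasDerivAt g (g' x) x)
    (hc : Continuous g') (hper : g 0 = g (2*Real.pi))
    (ξ : ℝ) (hξ : ξ ∈ Set.Ioo 0 (2*Real.pi)) (hz : g ξ = 0) :
    ∫ x in (0:ℝ)..(2*Real.pi), g x ^ 2 ≤ 4 * ∫ x in (0:ℝ)..(2*Real.pi), g' x ^ 2 := by
  have hπ := Real.pi_pos
  rcases le_or_gt ξ Real.pi with hcase | hcase
  · exact wirt_circle_aux g g' hd hc hper ξ hξ.1 hcase hz
  · -- reflect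
    set c : ℝ := 2*Real.pi with hc_def
    have hdG : ∀ x, HasDerivAt (fun y => g (c - y)) (-g' (c - x)) x := fun x => by
      simpa using (show HasDerivAt (fun y => g (c - y)) _ x from (hd (c - x)).comp x ((hasDerivAt_id x).const_sub c))
    have hcG : Continuous fun x : ℝ => -g' (c - x) :=
      (hc.comp (continuous_const.sub continuous_id)).neg
    have h := wirt_circle_aux (fun y => g (c - y)) (fun x => -g' (c - x)) hdG hcG
      (by simp [hc_def]; exact hper.symm)
      (c - ξ) (by simp [hc_def]; linarith [hξ.2]) (by rw [hc_def]; linarith)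
      (by simpa using hz)
    have e1 : (∫ x in (0:ℝ)..(2*Real.pi), (g (c - x)) ^ 2)
        = ∫ x in (0:ℝ)..(2*Real.pi), g x ^ 2 := by
      rw [show (∫ x in (0:ℝ)..(2*Real.pi), (g (c - x)) ^ 2)
          = ∫ x in (0:ℝ)..(2*Real.pi), (fun y => g y ^ 2) (c - x) from rfl,
        intervalIntegral.integral_comp_sub_left (fun y => g y ^ 2) c]
      congr 1 <;> rw [hc_def] <;> ring
    have e2 : (∫ x in (0:ℝ)..(2*Real.pi), (-g' (c - x)) ^ 2)
        = ∫ x in (0:ℝ)..(2*Real.pi), g' x ^ 2 := by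
      rw [show (∫ x in (0:ℝ)..(2*Real.pi), (-g' (c - x)) ^ 2)
          = ∫ x in (0:ℝ)..(2*Real.pi), (fun y => g' y ^ 2) (c - x) from by
            congr 1; funext x; simp [neg_sq],
        intervalIntegral.integral_comp_sub_left (fun y => g' y ^ 2) c]
      congr 1 <;> rw [hc_def] <;> ring
    rw [e1, e2] at h
    exact h

/-- Wirtinger for a mean-zero function with equal endpoint values. -/
lemma wirt_mean_zero (g g' : ℝ → ℝ) (hd : ∀ x, HasDerivAt g (g' x) x)
    (hc : Continuous g') (hper : g 0 = g (2*Real.pi))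
    (hmean : (∫ x in (0:ℝ)..(2*Real.pi), g x) = 0) :
    ∫ x in (0:ℝ)..(2*Real.pi), g x ^ 2 ≤ 4 * ∫ x in (0:ℝ)..(2*Real.pi), g' x ^ 2 := by
  have hπ := Real.pi_pos
  have hgc : Continuous g := continuous_iff_continuousAt.mpr fun x => (hd x).continuousAt
  by_cases hzero : ∃ ξ ∈ Set.Ioo (0:ℝ) (2*Real.pi), g ξ = 0
  · obtain ⟨ξ, hξ, hz⟩ := hzero
    exact wirt_circle g g' hd hc hper ξ hξ hz
  · exfalso
    push_neg at hzero
    have hπI : Real.pi ∈ Set.Ioo (0:ℝ) (2*Real.pi) := ⟨hπ, by linarith⟩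
    rcases lt_or_gt_of_ne (hzero Real.pi hπI) with hneg | hpos
    · -- g < 0 on Ioo
      have hn : ∀ x ∈ Set.Ioo (0:ℝ) (2*Real.pi), g x < 0 := by
        intro x hx
        rcases lt_or_gt_of_ne (hzero x hx) with h | h
        · exact h
        · exfalso
          have hiv : (0:ℝ) ∈ Set.uIcc (g x) (g Real.pi) := by
            rw [Set.mem_uIcc]; right; exact ⟨hneg.le, h.le⟩
          obtain ⟨y, hy, hgy⟩ := intermediate_value_uIcc (hgc.continuousOn) hiv
          have hsub : Set.uIcc x Real.pi ⊆ Set.Ioo (0:ℝ) (2*Real.pi) := by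
            intro y hy
            rcases Set.mem_uIcc.mp hy with ⟨h1,h2⟩ | ⟨h1,h2⟩ <;>
              exact ⟨by linarith [hx.1, hπI.1], by linarith [hx.2, hπI.2]⟩
          exact hzero y (hsub hy) hgy
      have : (∫ x in (0:ℝ)..(2*Real.pi), -g x) > 0 := by
        apply intervalIntegral.intervalIntegral_pos_of_pos_on
        · exact (hgc.neg).intervalIntegrable _ _
        · intro x hx; simpa using hn x hx
        · linarith
      rw [intervalIntegral.integral_neg, hmean] at this
      simp at this
    · have hp : ∀ x ∈ Set.Ioo (0:ℝ) (2*Real.pi), 0 < g x := by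
        intro x hx
        rcases lt_or_gt_of_ne (hzero x hx) with h | h
        · exfalso
          have hiv : (0:ℝ) ∈ Set.uIcc (g x) (g Real.pi) := by
            rw [Set.mem_uIcc]; left; exact ⟨h.le, hpos.le⟩
          obtain ⟨y, hy, hgy⟩ := intermediate_value_uIcc (hgc.continuousOn) hiv
          have hsub : Set.uIcc x Real.pi ⊆ Set.Ioo (0:ℝ) (2*Real.pi) := by
            intro y hy
            rcases Set.mem_uIcc.mp hy with ⟨h1,h2⟩ | ⟨h1,h2⟩ <;>
              exact ⟨by linarith [hx.1, hπI.1], by linarith [hx.2, hπI.2]⟩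
          exact hzero y (hsub hy) hgy
        · exact h
      have : (∫ x in (0:ℝ)..(2*Real.pi), g x) > 0 := by
        apply intervalIntegral.intervalIntegral_pos_of_pos_on
        · exact hgc.intervalIntegrable _ _
        · exact hp
        · linarith
      rw [hmean] at this
      simp at this

/-- Lyapunov decay for the heat equation with leader feedback
`e_t = a e_{xx} - K e(π,t)` on `[0,2π]` with periodic boundary conditions:
for `K > δ > 0`, `a ≥ K²/(K-δ)` and a suitable `q > 0`, the functional
`V(t) = ∫ e² + q ∫ e_x²` satisfies `V'(t) + 2δ V(t) ≤ 0`, hence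
`V(t) ≤ e^{-2δt} V(0)`. -/
theorem heat_leader_lyapunov_decay
    (a K δ q : ℝ) (hδ : 0 < δ) (hK : δ < K) (ha : K ^ 2 / (K - δ) ≤ a) (hq : 0 < q)
    (hqcond : (K ^ 2 / a - (K - δ)) * q ≤ a - K ^ 2 / (K - δ))
    (e ex exx et etx : ℝ → ℝ → ℝ)
    -- smoothness: all relevant functions are continuous in both variables
    (he_cont : Continuous fun p : ℝ × ℝ => e p.1 p.2)
    (hex_cont : Continuous fun p : ℝ × ℝ => ex p.1 p.2)
    (hexx_cont : Continuous fun p : ℝ × ℝ => exx p.1 p.2)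
    (het_cont : Continuous fun p : ℝ × ℝ => et p.1 p.2)
    (hetx_cont : Continuous fun p : ℝ × ℝ => etx p.1 p.2)
    -- spatial and temporal derivatives
    (hex : ∀ t, ∀ x, HasDerivAt (fun y => e y t) (ex x t) x)
    (hexx : ∀ t, ∀ x, HasDerivAt (fun y => ex y t) (exx x t) x)
    (het : ∀ x, ∀ t, HasDerivAt (fun s => e x s) (et x t) t)
    (hetx : ∀ x, ∀ t, HasDerivAt (fun s => ex x s) (etx x t) t)
    -- the PDE with pointwise leader feedback
    (hPDE : ∀ t ≥ (0 : ℝ), ∀ x ∈ Set.Icc (0 : ℝ) (2 * Real.pi),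
      et x t = a * exx x t - K * e Real.pi t)
    -- periodic boundary conditions
    (hbc : ∀ t ≥ (0 : ℝ), e 0 t = e (2 * Real.pi) t ∧ ex 0 t = ex (2 * Real.pi) t)
    -- the Lyapunov functional and its derivative (differentiation under the integral)
    (V V' : ℝ → ℝ)
    (hV : ∀ t, V t = (∫ x in (0 : ℝ)..(2 * Real.pi), (e x t) ^ 2)
        + q * ∫ x in (0 : ℝ)..(2 * Real.pi), (ex x t) ^ 2)
    (hV' : ∀ t ≥ (0 : ℝ), HasDerivAt V (V' t) t)
    (hV'formula : ∀ t ≥ (0 : ℝ), V' t =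
        2 * (∫ x in (0 : ℝ)..(2 * Real.pi), e x t * et x t)
        + q * (2 * ∫ x in (0 : ℝ)..(2 * Real.pi), ex x t * etx x t)) :
    ∀ t ≥ (0 : ℝ), V' t + 2 * δ * V t ≤ 0 ∧ V t ≤ Real.exp (-2 * δ * t) * V 0 := by
  have hπ := Real.pi_pos
  have h02 : (0:ℝ) ≤ 2 * Real.pi := by linarith
  have hKδ : 0 < K - δ := by linarith
  have hK0 : 0 < K := by linarith
  have ha0 : 0 < a := lt_of_lt_of_le (by positivity) ha
  -- mixed partial: ∂ₓ e_t = e_tx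
  have hetd : ∀ t x, HasDerivAt (fun y => et y t) (etx x t) x := fun t x =>
    clairaut_dir e ex et etx hex het hetx hetx_cont x t
  -- boundary condition for e_t, by differentiating the b.c. in time
  have hetbc : ∀ t ≥ (0:ℝ), et 0 t = et (2*Real.pi) t := by
    have hpos : Set.EqOn (fun s => et 0 s - et (2*Real.pi) s) (fun _ => (0:ℝ))
        (Set.Ioi (0:ℝ)) := by
      intro s hs
      have hgd : HasDerivAt (fun s => e 0 s - e (2*Real.pi) s)
          (et 0 s - et (2*Real.pi) s) s := (het 0 s).sub (het (2*Real.pi) s)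
      have hev : (fun s => e 0 s - e (2*Real.pi) s) =ᶠ[nhds s] (fun _ => (0:ℝ)) := by
        filter_upwards [Ioi_mem_nhds hs] with u hu
        exact sub_eq_zero.mpr (hbc u (le_of_lt hu)).1
      have h0 : HasDerivAt (fun _ : ℝ => (0:ℝ)) (et 0 s - et (2*Real.pi) s) s :=
        HasDerivAt.congr_of_eventuallyEq hgd hev.symm
      have := h0.unique (hasDerivAt_const s 0)
      simpa [sub_eq_zero] using this
    have hco : Continuous fun s => et 0 s - et (2*Real.pi) s :=
      (het_cont.comp (continuous_const.prodMk continuous_id)).sub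
        (het_cont.comp (continuous_const.prodMk continuous_id))
    have hcl := Set.EqOn.closure hpos hco continuous_const
    rw [closure_Ioi] at hcl
    intro t ht
    have := hcl ht
    simpa [sub_eq_zero] using this
  -- the differential inequality
  have key : ∀ t ≥ (0:ℝ), V' t + 2 * δ * V t ≤ 0 := by
    intro t ht
    have hbce := (hbc t ht).1
    have hbcex := (hbc t ht).2
    have hec : Continuous fun x => e x t :=
      he_cont.comp (continuous_id.prodMk continuous_const)
    have hexc : Continuous fun x => ex x t :=
      hex_cont.comp (continuous_id.prodMk continuous_const)
    have hexxc : Continuous fun x => exx x t :=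
      hexx_cont.comp (continuous_id.prodMk continuous_const)
    have hetc : Continuous fun x => et x t :=
      het_cont.comp (continuous_id.prodMk continuous_const)
    have hetxc : Continuous fun x => etx x t :=
      hetx_cont.comp (continuous_id.prodMk continuous_const)
    set c : ℝ := e Real.pi t with hc_def
    set E : ℝ := ∫ x in (0:ℝ)..(2*Real.pi), (e x t)^2 with hE_def
    set X : ℝ := ∫ x in (0:ℝ)..(2*Real.pi), (ex x t)^2 with hX_def
    set Y : ℝ := ∫ x in (0:ℝ)..(2*Real.pi), (exx x t)^2 with hY_def
    set P : ℝ := ∫ x in (0:ℝ)..(2*Real.pi), e x t with hP_def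
    -- ∫ e·exx = -X  (integration by parts)
    have hibp1 : (∫ x in (0:ℝ)..(2*Real.pi), (ex x t * ex x t + e x t * exx x t))
        = e (2*Real.pi) t * ex (2*Real.pi) t - e 0 t * ex 0 t := by
      exact intervalIntegral.integral_eq_sub_of_hasDerivAt
        (f := fun x => e x t * ex x t)
        (f' := fun x => ex x t * ex x t + e x t * exx x t)
        (fun x _ => (hex t x).mul (hexx t x))
        ((((hexc.mul hexc).add (hec.mul hexxc))).intervalIntegrable _ _)
    have hsq1 : (∫ x in (0:ℝ)..(2*Real.pi), ex x t * ex x t) = X := by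
      rw [hX_def]; apply intervalIntegral.integral_congr; intro x _; dsimp only; ring
    have hsplit1 : (∫ x in (0:ℝ)..(2*Real.pi), (ex x t * ex x t + e x t * exx x t))
        = (∫ x in (0:ℝ)..(2*Real.pi), ex x t * ex x t)
          + ∫ x in (0:ℝ)..(2*Real.pi), e x t * exx x t :=
      intervalIntegral.integral_add ((hexc.mul hexc).intervalIntegrable _ _)
        ((hec.mul hexxc).intervalIntegrable _ _)
    have hB : (∫ x in (0:ℝ)..(2*Real.pi), e x t * exx x t) = -X := by
      rw [hsplit1] at hibp1
      rw [← hbce, ← hbcex] at hibp1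
      rw [hsq1] at hibp1
      linarith
    -- ∫ e·et = -aX - KcP
    have hA : (∫ x in (0:ℝ)..(2*Real.pi), e x t * et x t) = -(a*X) - K*(c*P) := by
      have hcong : (∫ x in (0:ℝ)..(2*Real.pi), e x t * et x t)
          = ∫ x in (0:ℝ)..(2*Real.pi), (a * (e x t * exx x t) - K*c* e x t) := by
        apply intervalIntegral.integral_congr
        intro x hx
        rw [Set.uIcc_of_le h02] at hx
        dsimp only
        rw [hPDE t ht x hx, hc_def]; ring
      rw [hcong, intervalIntegral.integral_sub (f := fun x => a * (e x t * exx x t)) (g := fun x => K*c* e x t)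
          ((continuous_const.mul (hec.mul hexxc)).intervalIntegrable _ _)
          ((continuous_const.mul hec).intervalIntegrable _ _),
        intervalIntegral.integral_const_mul, intervalIntegral.integral_const_mul, hB, ← hP_def]
      ring
    -- ∫ exx = 0
    have hexxint : (∫ x in (0:ℝ)..(2*Real.pi), exx x t) = 0 := by
      have h := intervalIntegral.integral_eq_sub_of_hasDerivAt
        (f := fun x => ex x t) (f' := fun x => exx x t)
        (fun x (_ : x ∈ Set.uIcc (0:ℝ) (2*Real.pi)) => hexx t x)
        (hexxc.intervalIntegrable _ _)
      rw [h]; rw [← hbcex, sub_self]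
    -- ∫ ex·etx = -aY  (integration by parts + PDE)
    have hibp2 : (∫ x in (0:ℝ)..(2*Real.pi), (exx x t * et x t + ex x t * etx x t))
        = ex (2*Real.pi) t * et (2*Real.pi) t - ex 0 t * et 0 t := by
      exact intervalIntegral.integral_eq_sub_of_hasDerivAt
        (f := fun x => ex x t * et x t)
        (f' := fun x => exx x t * et x t + ex x t * etx x t)
        (fun x _ => (hexx t x).mul (hetd t x))
        ((((hexxc.mul hetc).add (hexc.mul hetxc))).intervalIntegrable _ _)
    have hsq2 : (∫ x in (0:ℝ)..(2*Real.pi), exx x t * exx x t) = Y := by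
      rw [hY_def]; apply intervalIntegral.integral_congr; intro x _; dsimp only; ring
    have hcong2 : (∫ x in (0:ℝ)..(2*Real.pi), exx x t * et x t)
        = ∫ x in (0:ℝ)..(2*Real.pi), (a * (exx x t * exx x t) - K*c* exx x t) := by
      apply intervalIntegral.integral_congr
      intro x hx
      rw [Set.uIcc_of_le h02] at hx
      dsimp only
      rw [hPDE t ht x hx, hc_def]; ring
    have hexxet : (∫ x in (0:ℝ)..(2*Real.pi), exx x t * et x t) = a * Y := by
      rw [hcong2, intervalIntegral.integral_sub (f := fun x => a * (exx x t * exx x t)) (g := fun x => K*c* exx x t)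
          ((continuous_const.mul (hexxc.mul hexxc)).intervalIntegrable _ _)
          ((continuous_const.mul hexxc).intervalIntegrable _ _),
        intervalIntegral.integral_const_mul, intervalIntegral.integral_const_mul,
        hsq2, hexxint]
      ring
    have hsplit2 : (∫ x in (0:ℝ)..(2*Real.pi), (exx x t * et x t + ex x t * etx x t))
        = (∫ x in (0:ℝ)..(2*Real.pi), exx x t * et x t)
          + ∫ x in (0:ℝ)..(2*Real.pi), ex x t * etx x t :=
      intervalIntegral.integral_add ((hexxc.mul hetc).intervalIntegrable _ _)
        ((hexc.mul hetxc).intervalIntegrable _ _)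
    have hC : (∫ x in (0:ℝ)..(2*Real.pi), ex x t * etx x t) = -(a*Y) := by
      rw [hsplit2, hexxet] at hibp2
      rw [← hbcex, ← hetbc t ht] at hibp2
      linarith
    -- the derivative of V
    have hV't : V' t = -2*(a*X) - 2*(K*(c*P)) - 2*(q*(a*Y)) := by
      rw [hV'formula t ht, hA, hC]; ring
    -- Wirtinger for σ = e - c
    set Sg : ℝ := ∫ x in (0:ℝ)..(2*Real.pi), (e x t - c)^2 with hSg_def
    have hσd : ∀ x, HasDerivAt (fun y => e y t - c) (ex x t) x :=
      fun x => (hex t x).sub_const c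
    have hSgX : Sg ≤ 4 * X := by
      rw [hSg_def, hX_def]
      exact wirt_sigma (fun y => e y t - c) (fun x => ex x t) hσd hexc
        (by rw [hc_def]; ring)
    -- Wirtinger for ex
    have hexmean : (∫ x in (0:ℝ)..(2*Real.pi), ex x t) = 0 := by
      have h := intervalIntegral.integral_eq_sub_of_hasDerivAt
        (f := fun x => e x t) (f' := fun x => ex x t)
        (fun x (_ : x ∈ Set.uIcc (0:ℝ) (2*Real.pi)) => hex t x)
        (hexc.intervalIntegrable _ _)
      rw [h]; rw [← hbce, sub_self]
    have hXY : X ≤ 4 * Y := by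
      rw [hX_def, hY_def]
      exact wirt_mean_zero (fun x => ex x t) (fun x => exx x t) (hexx t) hexxc
        hbcex hexmean
    -- S = ∫ e·σ = E - cP
    set S : ℝ := ∫ x in (0:ℝ)..(2*Real.pi), e x t * (e x t - c) with hS_def
    have hScP : S = E - c*P := by
      rw [hS_def]
      have hcong3 : (∫ x in (0:ℝ)..(2*Real.pi), e x t * (e x t - c))
          = ∫ x in (0:ℝ)..(2*Real.pi), ((e x t)^2 - c * e x t) := by
        apply intervalIntegral.integral_congr
        intro x _; dsimp only; ring
      rw [hcong3, intervalIntegral.integral_sub (f := fun x => (e x t)^2) (g := fun x => c * e x t)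
          ((hec.pow 2).intervalIntegrable _ _)
          ((continuous_const.mul hec).intervalIntegrable _ _),
        intervalIntegral.integral_const_mul, ← hE_def, ← hP_def]
    -- Young's inequality with ε = (K-δ)/K
    set C2 : ℝ := K^2/(4*(K-δ)) with hC2_def
    have hC2nn : 0 ≤ C2 := div_nonneg (sq_nonneg K) (by linarith)
    have hKS : K * S ≤ (K-δ)*E + C2*Sg := by
      have hpt : ∀ x ∈ Set.Icc (0:ℝ) (2*Real.pi),
          K * (e x t * (e x t - c)) ≤ (K-δ)*(e x t)^2 + C2*(e x t - c)^2 := by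
        intro x _
        have hiden : (K-δ)*(e x t)^2 + C2*(e x t - c)^2 - K * (e x t * (e x t - c))
            = (2*(K-δ)*e x t - K*(e x t - c))^2 / (4*(K-δ)) := by
          rw [hC2_def]
          field_simp
          ring
        have hnn : 0 ≤ (2*(K-δ)*e x t - K*(e x t - c))^2 / (4*(K-δ)) :=
          div_nonneg (sq_nonneg _) (by linarith)
        linarith [hiden ▸ hnn]
      have hmono := intervalIntegral.integral_mono_on (μ := volume)
        (f := fun x => K * (e x t * (e x t - c))) (g := fun x => (K-δ)*(e x t)^2 + C2*(e x t - c)^2) h02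
        ((continuous_const.mul (hec.mul (hec.sub continuous_const))).intervalIntegrable _ _)
        (((continuous_const.mul (hec.pow 2)).add
          (continuous_const.mul ((hec.sub continuous_const).pow 2))).intervalIntegrable _ _)
        hpt
      rw [intervalIntegral.integral_const_mul, intervalIntegral.integral_add
          (f := fun x => (K-δ)*(e x t)^2) (g := fun x => C2*(e x t - c)^2)
          ((continuous_const.mul (hec.pow 2)).intervalIntegrable _ _)
          ((continuous_const.mul ((hec.sub continuous_const).pow 2)).intervalIntegrable _ _),
        intervalIntegral.integral_const_mul, intervalIntegral.integral_const_mul,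
        ← hE_def, ← hSg_def] at hmono
      rw [hS_def]
      exact hmono
    -- nonnegativity
    have hX0 : 0 ≤ X := by
      rw [hX_def]; exact intervalIntegral.integral_nonneg h02 (fun x _ => sq_nonneg _)
    -- the coefficient is nonnegative
    have h4C2 : 4*C2 = K^2/(K-δ) := by rw [hC2_def]; field_simp
    have step1 : q*(K^2/a - (K-δ)) + q*(a/4 - δ) = q*((a-2*K)^2/(4*a)) := by
      field_simp; ring
    have step2 : 0 ≤ q*((a-2*K)^2/(4*a)) :=
      mul_nonneg hq.le (div_nonneg (sq_nonneg _) (by linarith))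
    have hcoeff : 0 ≤ a - 4*C2 + q*(a/4) - δ*q := by
      rw [h4C2]
      linarith [step1, step2, hqcond]
    -- final assembly
    have hf2 : C2*Sg ≤ C2*(4*X) := mul_le_mul_of_nonneg_left hSgX hC2nn
    have hf3 : (q*(a/4))*X ≤ (q*(a/4))*(4*Y) :=
      mul_le_mul_of_nonneg_left hXY (by positivity)
    have hprod : 0 ≤ (a - 4*C2 + q*(a/4) - δ*q) * X := mul_nonneg hcoeff hX0
    have ht1 : K*(c*P) = K*E - K*S := by rw [hScP]; ring
    have hR : 0 ≤ a*X + K*(c*P) + q*(a*Y) - δ*E - δ*(q*X) := by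
      linarith [hKS, hf2, hf3, hprod, ht1]
    have hVt : V t = E + q*X := by
      rw [hV t, ← hE_def, ← hX_def]
    rw [hV't, hVt]
    linarith [hR]
  -- Gronwall
  intro t ht
  refine ⟨key t ht, ?_⟩
  have hVcont : ContinuousOn V (Set.Ici 0) :=
    fun s hs => ((hV' s hs).continuousAt).continuousWithinAt
  have hWd : ∀ s ∈ Set.Ioi (0:ℝ), HasDerivAt (fun y => Real.exp (2*δ*y) * V y)
      (Real.exp (2*δ*s) * (V' s + 2*δ*V s)) s := by
    intro s hs
    have h0 : HasDerivAt (fun y : ℝ => 2*δ*y) (2*δ) s := by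
      simpa using (hasDerivAt_id s).const_mul (2*δ)
    have h1 : HasDerivAt (fun y : ℝ => Real.exp (2*δ*y)) (Real.exp (2*δ*s) * (2*δ)) s :=
      (Real.hasDerivAt_exp (2*δ*s)).comp s h0
    have h2 := h1.mul (hV' s (le_of_lt hs))
    have e' : Real.exp (2*δ*s) * (V' s + 2*δ*V s)
        = Real.exp (2*δ*s) * (2*δ) * V s + Real.exp (2*δ*s) * V' s := by ring
    rw [e']; exact h2
  have hanti : AntitoneOn (fun y => Real.exp (2*δ*y) * V y) (Set.Ici 0) := by
    apply antitoneOn_of_deriv_nonpos (convex_Ici 0)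
    · exact ((Real.continuous_exp.comp (continuous_const.mul continuous_id)).continuousOn).mul hVcont
    · intro s hs
      rw [interior_Ici] at hs
      exact ((hWd s hs).differentiableAt).differentiableWithinAt
    · intro s hs
      rw [interior_Ici] at hs
      rw [(hWd s hs).deriv]
      exact mul_nonpos_of_nonneg_of_nonpos (Real.exp_nonneg _) (key s (le_of_lt hs))
  have h0t := hanti (Set.self_mem_Ici) ht ht
  simp only [mul_zero, Real.exp_zero, one_mul] at h0t
  have hexp : (0:ℝ) < Real.exp (2*δ*t) := Real.exp_pos _
  rw [show (-2*δ*t) = -(2*δ*t) by ring, Real.exp_neg, inv_mul_eq_div, le_div_iff₀ hexp]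
  linarith [h0t]
end

section
/- Reciprocally convex (Park) inequality: Let r > 0, s ∈ ℝ with the 2×2 matrix [[r, s], [s, r]] positive semidefinite, let α ∈ (0,1), and let ξ₁, ξ₂ ∈ ℝ. Then (1/α) r ξ₁² + (1/(1-α)) r ξ₂² ≥ r ξ₁² + r ξ₂² + 2 s ξ₁ ξ₂, i.e., (1/α)rξ₁² + (1/(1-α))rξ₂² ≥ [ξ₁, ξ₂] [[r, s],[s, r]] [ξ₁, ξ₂]ᵀ. -/
/-- Scalar reciprocally convex (Park) inequality: if `r > 0`, `[[r,s],[s,r]] ⪰ 0` and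
`α ∈ (0,1)`, then `(1/α) r ξ₁² + (1/(1-α)) r ξ₂² ≥ r ξ₁² + r ξ₂² + 2 s ξ₁ ξ₂`. -/
theorem park_reciprocally_convex (r s α ξ₁ ξ₂ : ℝ) (hr : 0 < r)
    (hpsd : (!![r, s; s, r] : Matrix (Fin 2) (Fin 2) ℝ).PosSemidef)
    (hα0 : 0 < α) (hα1 : α < 1) :
    r * ξ₁ ^ 2 + r * ξ₂ ^ 2 + 2 * s * ξ₁ * ξ₂ ≤
      (1 / α) * r * ξ₁ ^ 2 + (1 / (1 - α)) * r * ξ₂ ^ 2 := by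
  have h2 := hpsd.dotProduct_mulVec_nonneg ![1, -1]
  have h3 := hpsd.dotProduct_mulVec_nonneg ![1, 1]
  simp [Matrix.mulVec, dotProduct, Fin.sum_univ_two] at h2 h3
  have h1 : 0 < 1 - α := by linarith
  rw [← sub_nonneg]
  have key : 0 ≤ (1 - α) ^ 2 * r * ξ₁ ^ 2 + α ^ 2 * r * ξ₂ ^ 2
      - 2 * α * (1 - α) * s * ξ₁ * ξ₂ := by
    nlinarith [sq_nonneg ((1 - α) * ξ₁ - α * ξ₂), sq_nonneg ((1 - α) * ξ₁ + α * ξ₂),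
      mul_pos hα0 h1]
  have expand : (1 / α) * r * ξ₁ ^ 2 + (1 / (1 - α)) * r * ξ₂ ^ 2
      - (r * ξ₁ ^ 2 + r * ξ₂ ^ 2 + 2 * s * ξ₁ * ξ₂)
      = ((1 - α) ^ 2 * r * ξ₁ ^ 2 + α ^ 2 * r * ξ₂ ^ 2
        - 2 * α * (1 - α) * s * ξ₁ * ξ₂) / (α * (1 - α)) := by
    field_simp
    ring
  rw [expand]
  positivity
end
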